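/- arXiv:math/0406024 — 5 statements merged into one kernel-verified Lean document; each statement's English description precedes it below -/
import Mathlib

section
/- For a distribution D on the path with root a leaf r, define the weight w(D) = Σ_v D(v)/2^{dist(v,r)}. Then D is r-unsolvable if and only if w(D) < 1. -/
/-- A single pebbling step: remove two pebbles from `u` and place one on an adjacent `v`. -/
def PebStep {V : Type*} [DecidableEq V] (G : SimpleGraph V) (D D' : V → ℕ) : Prop :=
  ∃ u v : V, G.Adj u v ∧ 2 ≤ D u ∧
    D' = Function.update (Function.update D u (D u - 2)) v (D v + 1)

/-- `D` is `r`-solvable: some sequence of pebbling steps places a pebble on `r`. -/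
def PebSolvable {V : Type*} [DecidableEq V] (G : SimpleGraph V) (D : V → ℕ) (r : V) : Prop :=
  ∃ D' : V → ℕ, Relation.ReflTransGen (PebStep G) D D' ∧ 1 ≤ D' r

/-- The pebbling number of `G`: the least `t` such that every distribution of size `t`
is `r`-solvable for every root `r`. -/
noncomputable def pebblingNumber (V : Type*) [Fintype V] [DecidableEq V] (G : SimpleGraph V) : ℕ :=
  sInf {t : ℕ | ∀ D : V → ℕ, ∀ r : V, (∑ v, D v) = t → PebSolvable G D r}


open SimpleGraph Finset

lemma walk_length_ge {n : ℕ} {i j : Fin (n+1)} (p : (pathGraph (n+1)).Walk i j) :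
    (i.val - j.val) + (j.val - i.val) ≤ p.length := by
  induction p with
  | nil => simp
  | cons h p ih =>
    rw [pathGraph_adj] at h
    simp only [SimpleGraph.Walk.length_cons]
    omega

lemma dist_le_aux {n : ℕ} : ∀ (k : ℕ) (i j : Fin (n+1)), j.val = i.val + k →
    (pathGraph (n+1)).dist i j ≤ k := by
  intro k
  induction k with
  | zero => intro i j h; have : i = j := Fin.ext (by omega); simp [this]
  | succ k ih =>
    intro i j h
    have hi1 : i.val + 1 < n + 1 := by omega
    have hadj : (pathGraph (n+1)).Adj i ⟨i.val+1, hi1⟩ := by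
      rw [pathGraph_adj]; left; rfl
    calc (pathGraph (n+1)).dist i j ≤ (pathGraph (n+1)).dist i ⟨i.val+1, hi1⟩ +
          (pathGraph (n+1)).dist ⟨i.val+1, hi1⟩ j :=
            (pathGraph_connected n).dist_triangle
      _ ≤ 1 + k := by
          gcongr
          · exact le_of_eq (dist_eq_one_iff_adj.2 hadj)
          · exact ih _ _ (by simp; omega)
      _ = k + 1 := by omega

lemma pathGraph_dist {n : ℕ} (i j : Fin (n+1)) :
    (pathGraph (n+1)).dist i j = (i.val - j.val) + (j.val - i.val) := by
  refine le_antisymm ?_ ?_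
  · rcases le_or_gt i.val j.val with h | h
    · have := dist_le_aux (j.val - i.val) i j (by omega); omega
    · have := dist_le_aux (i.val - j.val) j i (by omega)
      rw [SimpleGraph.dist_comm]; omega
  · obtain ⟨p, hp⟩ := ((pathGraph_connected n) i j).exists_walk_length_eq_dist
    have := walk_length_ge p
    omega

noncomputable def pW (n : ℕ) (r : Fin (n+1)) (D : Fin (n+1) → ℕ) : ℚ :=
  ∑ v, (D v : ℚ) / 2 ^ ((pathGraph (n+1)).dist v r)

lemma pW_update {n : ℕ} (r : Fin (n+1)) (D : Fin (n+1) → ℕ) (a : Fin (n+1)) (b : ℕ) :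
    pW n r (Function.update D a b) =
      pW n r D + ((b : ℚ) - D a) / 2 ^ ((pathGraph (n+1)).dist a r) := by
  unfold pW
  have h1 : ∀ x ∈ univ.erase a,
      ((Function.update D a b x : ℕ) : ℚ) / 2 ^ ((pathGraph (n+1)).dist x r)
        = (D x : ℚ) / 2 ^ ((pathGraph (n+1)).dist x r) := fun x hx => by
    rw [Function.update_of_ne (Finset.ne_of_mem_erase hx)]
  rw [← Finset.sum_erase_add univ _ (mem_univ a),
    ← Finset.sum_erase_add univ (fun v => (D v : ℚ) / 2 ^ ((pathGraph (n+1)).dist v r))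
      (mem_univ a), Finset.sum_congr rfl h1, Function.update_self]
  ring

lemma pW_step {n : ℕ} (r : Fin (n+1)) (D : Fin (n+1) → ℕ) (u v : Fin (n+1))
    (hne : u ≠ v) (h2 : 2 ≤ D u) :
    pW n r (Function.update (Function.update D u (D u - 2)) v (D v + 1)) =
      pW n r D - 2 / 2 ^ ((pathGraph (n+1)).dist u r)
        + 1 / 2 ^ ((pathGraph (n+1)).dist v r) := by
  have hv : Function.update D u (D u - 2) v = D v := Function.update_of_ne hne.symm _ _
  rw [pW_update, pW_update, hv, Nat.cast_sub h2]
  push_cast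
  ring

lemma pM_update {n : ℕ} (c : Fin (n+1) → ℕ) (D : Fin (n+1) → ℕ) (a : Fin (n+1)) (b : ℕ) :
    (∑ x, Function.update D a b x * c x) + D a * c a = (∑ x, D x * c x) + b * c a := by
  have h1 : ∀ x ∈ univ.erase a,
      Function.update D a b x * c x = D x * c x := fun x hx => by
    rw [Function.update_of_ne (Finset.ne_of_mem_erase hx)]
  rw [← Finset.sum_erase_add univ _ (mem_univ a),
    ← Finset.sum_erase_add univ (fun x => D x * c x) (mem_univ a),
    Finset.sum_congr rfl h1, Function.update_self]
  ring

lemma pW_mono {n : ℕ} (r : Fin (n+1)) {D D' : Fin (n+1) → ℕ}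
    (h : PebStep (pathGraph (n+1)) D D') : pW n r D' ≤ pW n r D := by
  obtain ⟨u, v, hadj, h2, hD'⟩ := h
  subst hD'
  rw [pW_step r D u v hadj.ne h2]
  have hd : (pathGraph (n+1)).dist u r ≤ (pathGraph (n+1)).dist v r + 1 := by
    rw [pathGraph_dist, pathGraph_dist]
    rw [pathGraph_adj] at hadj
    omega
  have hp : (2:ℚ) ^ ((pathGraph (n+1)).dist u r) ≤ 2 ^ ((pathGraph (n+1)).dist v r + 1) := by
    exact pow_le_pow_right₀ (by norm_num) hd
  have h1 : (1:ℚ) / 2 ^ ((pathGraph (n+1)).dist v r)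
      ≤ 2 / 2 ^ ((pathGraph (n+1)).dist u r) := by
    rw [div_le_div_iff₀ (by positivity) (by positivity)]
    rw [pow_succ] at hp
    linarith
  linarith

lemma pW_mono_rtg {n : ℕ} (r : Fin (n+1)) {D D' : Fin (n+1) → ℕ}
    (h : Relation.ReflTransGen (PebStep (pathGraph (n+1))) D D') : pW n r D' ≤ pW n r D := by
  induction h with
  | refl => exact le_refl _
  | tail _ hstep ih => exact le_trans (pW_mono r hstep) ih

lemma pW_ge_of_solvable {n : ℕ} (r : Fin (n+1)) {D : Fin (n+1) → ℕ}
    (h : PebSolvable (pathGraph (n+1)) D r) : 1 ≤ pW n r D := by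
  obtain ⟨D', hrt, hr1⟩ := h
  refine le_trans ?_ (pW_mono_rtg r hrt)
  have h0 : (pathGraph (n+1)).dist r r = 0 := by simp
  calc (1:ℚ) ≤ (D' r : ℚ) / 2 ^ ((pathGraph (n+1)).dist r r) := by
        rw [h0]; simp; exact_mod_cast hr1
    _ ≤ pW n r D' := Finset.single_le_sum (f := fun v => (D' v : ℚ) / 2 ^ ((pathGraph (n+1)).dist v r))
        (fun i _ => by positivity) (mem_univ r)

lemma geom_key (n : ℕ) : ∑ i ∈ Finset.range (n+1), (1:ℚ) / 2 ^ i = 2 - (1/2)^n := by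
  induction n with
  | zero => norm_num
  | succ m ih =>
    rw [Finset.sum_range_succ, ih]
    rw [← one_div_pow]
    ring

lemma sum_pow_dist {n : ℕ} (r : Fin (n+1)) (hr : r = 0 ∨ r = Fin.last n) :
    (∑ v : Fin (n+1), (1:ℚ) / 2 ^ ((pathGraph (n+1)).dist v r)) = 2 - (1/2) ^ n := by
  rcases hr with h | h <;> subst h
  · have hd : ∀ v : Fin (n+1), (pathGraph (n+1)).dist v 0 = v.val := by
      intro v; rw [pathGraph_dist]; simp
    simp only [hd]
    rw [Fin.sum_univ_eq_sum_range (fun i => (1:ℚ) / 2 ^ i)]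
    exact geom_key n
  · have hd : ∀ v : Fin (n+1), (pathGraph (n+1)).dist v (Fin.last n) = n - v.val := by
      intro v; rw [pathGraph_dist]; simp [Fin.last]; omega
    simp only [hd]
    rw [Fin.sum_univ_eq_sum_range (fun i => (1:ℚ) / 2 ^ (n - i))]
    rw [show (∑ i ∈ Finset.range (n+1), (1:ℚ) / 2 ^ (n - i))
        = ∑ i ∈ Finset.range (n+1), (1:ℚ) / 2 ^ (n + 1 - 1 - i) from rfl]
    rw [Finset.sum_range_reflect (fun i => (1:ℚ) / 2 ^ i) (n+1)]
    exact geom_key n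

lemma exists_big {n : ℕ} {r : Fin (n+1)} (hr : r = 0 ∨ r = Fin.last n) {D : Fin (n+1) → ℕ}
    (h0 : D r = 0) (hW : 1 ≤ pW n r D) : ∃ v, 2 ≤ D v ∧ v ≠ r := by
  by_contra hc
  push_neg at hc
  have hle : ∀ v, v ≠ r → D v ≤ 1 := by
    intro v hv
    by_contra h
    exact hv (hc v (by omega))
  have h1 : pW n r D ≤ ∑ v ∈ univ.erase r, (1:ℚ) / 2 ^ ((pathGraph (n+1)).dist v r) := by
    unfold pW
    rw [← Finset.sum_erase_add univ _ (mem_univ r), h0]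
    simp only [Nat.cast_zero, zero_div, add_zero]
    refine Finset.sum_le_sum fun v hv => ?_
    have := hle v (Finset.ne_of_mem_erase hv)
    have hp : (0:ℚ) < 2 ^ ((pathGraph (n+1)).dist v r) := by positivity
    rw [div_le_div_iff₀ hp hp]
    have : (D v : ℚ) ≤ 1 := by exact_mod_cast this
    nlinarith
  have h2 : ∑ v ∈ univ.erase r, (1:ℚ) / 2 ^ ((pathGraph (n+1)).dist v r)
      = (2 - (1/2)^n) - 1 := by
    have := Finset.sum_erase_add univ
      (fun v => (1:ℚ) / 2 ^ ((pathGraph (n+1)).dist v r)) (mem_univ r)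
    rw [sum_pow_dist r hr] at this
    have hrr : (pathGraph (n+1)).dist r r = 0 := by simp
    simp only [hrr] at this
    norm_num at this ⊢
    linarith
  have hpos : (0:ℚ) < (1/2)^n := by positivity
  linarith

lemma exists_neighbor {n : ℕ} (r v : Fin (n+1)) (hr : r = 0 ∨ r = Fin.last n) (h1 : v ≠ r) :
    ∃ u, (pathGraph (n+1)).Adj v u ∧
      (pathGraph (n+1)).dist u r + 1 = (pathGraph (n+1)).dist v r := by
  rcases hr with h | h <;> subst h
  · have hv : v.val ≠ 0 := fun hh => h1 (Fin.ext (by simp [hh]))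
    refine ⟨⟨v.val - 1, by omega⟩, ?_, ?_⟩
    · rw [pathGraph_adj]; right; simp; omega
    · rw [pathGraph_dist, pathGraph_dist]; simp; omega
  · have hv : v.val ≠ n := fun hh => h1 (Fin.ext (by simp [Fin.last, hh]))
    have hvn := v.isLt
    refine ⟨⟨v.val + 1, by omega⟩, ?_, ?_⟩
    · rw [pathGraph_adj]; left; simp
    · rw [pathGraph_dist, pathGraph_dist]; simp [Fin.last]; omega

lemma solv_of_pW {n : ℕ} (r : Fin (n+1)) (hr : r = 0 ∨ r = Fin.last n) :
    ∀ (N : ℕ) (D : Fin (n+1) → ℕ),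
      (∑ v, D v * (pathGraph (n+1)).dist v r) ≤ N → 1 ≤ pW n r D →
      PebSolvable (pathGraph (n+1)) D r := by
  intro N
  induction N using Nat.strong_induction_on with
  | _ N ih =>
  intro D hM hW
  rcases Nat.lt_or_ge (D r) 1 with h0 | hr1
  swap
  · exact ⟨D, Relation.ReflTransGen.refl, hr1⟩
  have h0 : D r = 0 := by omega
  obtain ⟨v, hv2, hvr⟩ := exists_big hr h0 hW
  obtain ⟨u, hadj, hdu⟩ := exists_neighbor r v hr hvr
  have hvu : v ≠ u := hadj.ne
  set D' := Function.update (Function.update D v (D v - 2)) u (D u + 1) with hD'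
  have hstep : PebStep (pathGraph (n+1)) D D' := ⟨v, u, hadj, hv2, hD'⟩
  have hW' : pW n r D' = pW n r D := by
    rw [hD', pW_step r D v u hvu hv2, ← hdu, pow_succ]
    have ha : (0:ℚ) < (2:ℚ) ^ ((pathGraph (n+1)).dist u r) := by positivity
    field_simp
    ring
  -- measure decrease
  have e1 := pM_update (fun x => (pathGraph (n+1)).dist x r) D v (D v - 2)
  have e2 := pM_update (fun x => (pathGraph (n+1)).dist x r)
    (Function.update D v (D v - 2)) u (D u + 1)
  have hDu : Function.update D v (D v - 2) u = D u := Function.update_of_ne hvu.symm _ _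
  rw [hDu] at e2
  have hcv : 1 ≤ (pathGraph (n+1)).dist v r :=
    (pathGraph_connected n).pos_dist_of_ne hvr
  have hsub : (D v - 2) * (pathGraph (n+1)).dist v r + 2 * (pathGraph (n+1)).dist v r
      = D v * (pathGraph (n+1)).dist v r := by
    rw [Nat.sub_mul]
    have : 2 * (pathGraph (n+1)).dist v r ≤ D v * (pathGraph (n+1)).dist v r :=
      Nat.mul_le_mul_right _ hv2
    omega
  have hadd : (D u + 1) * (pathGraph (n+1)).dist u r
      = D u * (pathGraph (n+1)).dist u r + (pathGraph (n+1)).dist u r := by ring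
  rw [hadd] at e2
  have hlt : (∑ x, D' x * (pathGraph (n+1)).dist x r) < N := by
    have := hdu
    have h2cv : 2 * (pathGraph (n+1)).dist v r
        = 2 * (pathGraph (n+1)).dist u r + 2 := by omega
    -- combine e1, e2, hsub linearly
    zify at e1 e2 hsub hM ⊢
    linarith
  obtain ⟨D'', hrt, hfin⟩ := ih _ hlt D' le_rfl (by rw [hW']; exact hW)
  exact ⟨D'', Relation.ReflTransGen.head hstep hrt, hfin⟩

theorem path_weight_unsolvable (n : ℕ) (D : Fin (n + 1) → ℕ) (r : Fin (n + 1))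
    (hr : r = 0 ∨ r = Fin.last n) :
    ¬ PebSolvable (SimpleGraph.pathGraph (n + 1)) D r ↔
      (∑ v, (D v : ℚ) / 2 ^ (SimpleGraph.pathGraph (n + 1)).dist v r) < 1 := by
  have hsum : (∑ v, (D v : ℚ) / 2 ^ (SimpleGraph.pathGraph (n + 1)).dist v r) = pW n r D := rfl
  rw [hsum]
  constructor
  · intro hns
    by_contra hlt
    push_neg at hlt
    exact hns (solv_of_pW r hr _ D le_rfl hlt)
  · intro hlt hs
    have := pW_ge_of_solvable r hs
    linarith
end

section
/- For k ≥ 1, the pebbling number of the even cycle C_{2k} equals 2^k. -/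
section helpers
variable {V : Type*} [Fintype V] [DecidableEq V] {G : SimpleGraph V}

lemma weighted_step (w D : V → ℕ) {u v : V} (huv : u ≠ v) (h2 : 2 ≤ D u) :
    (∑ x, w x * (Function.update (Function.update D u (D u - 2)) v (D v + 1)) x) + 2 * w u
      = (∑ x, w x * D x) + w v := by
  set D' := Function.update (Function.update D u (D u - 2)) v (D v + 1) with hD'
  have key : ∀ x, w x * D' x + (if x = u then 2 * w u else 0)
      = w x * D x + (if x = v then w v else 0) := by
    intro x
    by_cases hxu : x = u
    · subst hxu
      have h1 : D' x = D x - 2 := by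
        simp [hD', Function.update_apply, if_neg (fun h : x = v => huv h)]
      rw [h1, if_pos rfl, if_neg (fun h : x = v => huv h)]
      have : D x - 2 + 2 = D x := by omega
      calc w x * (D x - 2) + 2 * w x = w x * (D x - 2 + 2) := by ring
        _ = w x * D x + 0 := by rw [this]; ring
    · by_cases hxv : x = v
      · subst hxv
        simp [hD', Function.update_apply, hxu]
        ring
      · simp [hD', Function.update_apply, hxu, hxv]
  calc (∑ x, w x * D' x) + 2 * w u
      = ∑ x, (w x * D' x + (if x = u then 2 * w u else 0)) := by
        rw [Finset.sum_add_distrib, Finset.sum_ite_eq' Finset.univ u (fun _ => 2 * w u)]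
        simp
    _ = ∑ x, (w x * D x + (if x = v then w v else 0)) := by
        exact Finset.sum_congr rfl fun x _ => key x
    _ = (∑ x, w x * D x) + w v := by
        rw [Finset.sum_add_distrib, Finset.sum_ite_eq' Finset.univ v (fun _ => w v)]
        simp

lemma sum_step {D : V → ℕ} {u v : V} (huv : u ≠ v) (h2 : 2 ≤ D u) :
    (∑ x, (Function.update (Function.update D u (D u - 2)) v (D v + 1)) x) + 1
      = ∑ x, D x := by
  have := weighted_step (fun _ => 1) D huv h2
  simpa using this

/-- If a "strategy" weight has total `D`-weight exceeding the total weight, `D` is solvable. -/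
lemma gen_solvable (w : V → ℕ) (r : V)
    (H : ∀ v, w v ≠ 0 → ∃ u, G.Adj v u ∧ (u = r ∨ 2 * w v ≤ w u)) :
    ∀ N (D : V → ℕ), (∑ x, D x) = N → (∑ x, w x) < ∑ x, w x * D x →
      PebSolvable G D r := by
  intro N
  induction N using Nat.strong_induction_on with
  | _ N ih =>
    intro D hN hW
    by_cases hr : 1 ≤ D r
    · exact ⟨D, Relation.ReflTransGen.refl, hr⟩
    · have hv : ∃ v, w v ≠ 0 ∧ 2 ≤ D v := by
        by_contra hc
        push_neg at hc
        have : (∑ x, w x * D x) ≤ ∑ x, w x := by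
          apply Finset.sum_le_sum
          intro x _
          by_cases hx : w x = 0
          · simp [hx]
          · have := hc x hx
            calc w x * D x ≤ w x * 1 := Nat.mul_le_mul_left _ (by omega)
              _ = w x := by ring
        omega
      obtain ⟨v, hwv, hDv⟩ := hv
      obtain ⟨u, hadj, hu⟩ := H v hwv
      have hne : v ≠ u := G.ne_of_adj hadj
      set D' := Function.update (Function.update D v (D v - 2)) u (D u + 1) with hD'
      have hstep : PebStep G D D' := ⟨v, u, hadj, hDv, rfl⟩
      have hsum : (∑ x, D' x) + 1 = ∑ x, D x := sum_step hne hDv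
      rcases hu with hur | hwu
      · refine ⟨D', Relation.ReflTransGen.single hstep, ?_⟩
        subst hur
        simp [hD', Function.update_apply]
      · have hW' : (∑ x, w x) < ∑ x, w x * D' x := by
          have hws := weighted_step w D hne hDv
          rw [← hD'] at hws
          omega
        have hN' : (∑ x, D' x) < N := by omega
        obtain ⟨D'', hsteps, hr''⟩ := ih _ hN' D' rfl hW'
        exact ⟨D'', Relation.ReflTransGen.head hstep hsteps, hr''⟩

/-- A weight that at most doubles along edges is nonincreasing under pebbling steps. -/
lemma weight_mono (w : V → ℕ) (hw : ∀ u v, G.Adj u v → w v ≤ 2 * w u)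
    {D D' : V → ℕ} (h : Relation.ReflTransGen (PebStep G) D D') :
    ∑ x, w x * D' x ≤ ∑ x, w x * D x := by
  induction h with
  | refl => exact le_rfl
  | tail _ hstep ih =>
    obtain ⟨u, v, hadj, h2, rfl⟩ := hstep
    have := weighted_step w _ (G.ne_of_adj hadj) h2
    have := hw u v hadj
    omega

end helpers

section fincalc
open SimpleGraph
variable {n : ℕ} [NeZero n]

lemma fin_val_one (hn : 2 ≤ n) : (1 : Fin n).val = 1 := by
  rw [Fin.val_one', Nat.mod_eq_of_lt hn]

lemma fin_val_sub_one (hn : 2 ≤ n) (j : Fin n) (hj : 1 ≤ j.val) :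
    (j - 1).val = j.val - 1 := by
  rw [Fin.sub_def]
  simp only [fin_val_one hn]
  have h2 : n - 1 + j.val = n + (j.val - 1) := by omega
  rw [h2, Nat.add_mod_left, Nat.mod_eq_of_lt (by omega : j.val - 1 < n)]

lemma fin_val_add_one (j : Fin n) : (j + 1).val = (j.val + 1) % n := by
  rw [Fin.add_def]
  rw [Fin.val_one']
  by_cases h : n = 1
  · subst h; omega
  · have : (1 : ℕ) % n = 1 := Nat.mod_eq_of_lt (by have := NeZero.pos n; omega)
    rw [this]

lemma cycle_adj_succ (hn : 2 ≤ n) (x : Fin n) : (cycleGraph n).Adj (x + 1) x := by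
  rw [cycleGraph_adj']
  left
  have h : x + 1 - x = 1 := by abel
  rw [h, fin_val_one hn]

lemma cycle_adj_cases (hn : 2 ≤ n) {u v : Fin n} (h : (cycleGraph n).Adj u v) :
    u = v + 1 ∨ v = u + 1 := by
  rw [cycleGraph_adj'] at h
  rcases h with h | h
  · left
    have h1 : u - v = 1 := Fin.ext (by rw [h, fin_val_one hn])
    have := sub_eq_iff_eq_add.mp h1
    exact this.trans (add_comm 1 v)
  · right
    have h1 : v - u = 1 := Fin.ext (by rw [h, fin_val_one hn])
    have := sub_eq_iff_eq_add.mp h1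
    exact this.trans (add_comm 1 u)

end fincalc

lemma geom_two (m : ℕ) : ∑ i ∈ Finset.range m, 2 ^ i = 2 ^ m - 1 := by
  induction m with
  | zero => simp
  | succ m ih =>
    rw [Finset.sum_range_succ, ih]
    have h1 : 1 ≤ 2 ^ m := Nat.one_le_two_pow
    have h2 : 2 ^ (m + 1) = 2 ^ m + 2 ^ m := by ring
    omega

lemma strat_sum_one (k m : ℕ) (hm : k + 1 ≤ m) :
    ∑ j ∈ Finset.range m, (if 1 ≤ j ∧ j ≤ k then 2 ^ (k - j) else 0) = 2 ^ k - 1 := by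
  induction m with
  | zero => omega
  | succ m ih =>
    by_cases hmk : k + 1 ≤ m
    · rw [Finset.sum_range_succ, ih hmk, if_neg (by omega)]
      omega
    · have hm' : m = k := by omega
      rw [hm', Finset.sum_range_succ']
      have h0 : (if 1 ≤ 0 ∧ 0 ≤ k then 2 ^ (k - 0) else 0) = 0 := by simp
      rw [h0]
      have hcong : ∀ i ∈ Finset.range k,
          (if 1 ≤ i + 1 ∧ i + 1 ≤ k then 2 ^ (k - (i + 1)) else 0) = 2 ^ (k - 1 - i) := by
        intro i hi
        rw [Finset.mem_range] at hi
        rw [if_pos (by omega)]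
        congr 1
        omega
      rw [Finset.sum_congr rfl hcong]
      have := Finset.sum_range_reflect (fun i => 2 ^ i) k
      rw [this, geom_two]
      omega

lemma strat_sum_two (k m : ℕ) :
    ∑ j ∈ Finset.range (k + m), (if k ≤ j then 2 ^ (j - k) else 0) = 2 ^ m - 1 := by
  induction m with
  | zero =>
    have h0 : ∑ j ∈ Finset.range (k + 0), (if k ≤ j then 2 ^ (j - k) else 0) = 0 := by
      apply Finset.sum_eq_zero
      intro j hj
      rw [Finset.mem_range] at hj
      rw [if_neg (by omega)]
    rw [h0]
    simp
  | succ m ih =>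
    rw [show k + (m + 1) = (k + m) + 1 from rfl, Finset.sum_range_succ, ih,
      if_pos (by omega)]
    have h1 : 1 ≤ 2 ^ m := Nat.one_le_two_pow
    have h2 : 2 ^ (m + 1) = 2 ^ m + 2 ^ m := by ring
    have h3 : k + m - k = m := by omega
    rw [h3]
    omega

lemma md_step (k a b : ℕ) (ha : a < 2 * k) (hb : b < 2 * k)
    (h : a = (b + 1) % (2 * k) ∨ b = (a + 1) % (2 * k)) :
    k - min b (2 * k - b) ≤ (k - min a (2 * k - a)) + 1 := by
  rcases h with h | h
  · by_cases hb1 : b + 1 = 2 * k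
    · rw [hb1, Nat.mod_self] at h
      omega
    · rw [Nat.mod_eq_of_lt (by omega)] at h
      omega
  · by_cases ha1 : a + 1 = 2 * k
    · rw [ha1, Nat.mod_self] at h
      omega
    · rw [Nat.mod_eq_of_lt (by omega)] at h
      omega

theorem pebbling_number_even_cycle (k : ℕ) (hk : 1 ≤ k) :
    pebblingNumber (Fin (2 * k)) (SimpleGraph.cycleGraph (2 * k)) = 2 ^ k := by
  haveI : NeZero (2 * k) := ⟨by omega⟩
  have hn2 : 2 ≤ 2 * k := by omega
  have hpow1 : 1 ≤ 2 ^ k := Nat.one_le_two_pow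
  -- Upper bound: every distribution of size 2^k is solvable
  have upper : ∀ (D : Fin (2 * k) → ℕ) (r : Fin (2 * k)), (∑ v, D v) = 2 ^ k →
      PebSolvable (SimpleGraph.cycleGraph (2 * k)) D r := by
    intro D r hD
    by_cases hr : 1 ≤ D r
    · exact ⟨D, Relation.ReflTransGen.refl, hr⟩
    have hDr : D r = 0 := by omega
    set w1 : Fin (2 * k) → ℕ :=
      fun v => if 1 ≤ (v - r).val ∧ (v - r).val ≤ k then 2 ^ (k - (v - r).val) else 0 with hw1
    set w2 : Fin (2 * k) → ℕ :=
      fun v => if k ≤ (v - r).val then 2 ^ ((v - r).val - k) else 0 with hw2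
    have hsum1 : (∑ v, w1 v) = 2 ^ k - 1 := by
      have e1 : (∑ v, w1 v) = ∑ j : Fin (2 * k),
          (if 1 ≤ j.val ∧ j.val ≤ k then 2 ^ (k - j.val) else 0) := by
        rw [← Equiv.sum_comp (Equiv.subRight r)
          (fun j : Fin (2 * k) => if 1 ≤ j.val ∧ j.val ≤ k then 2 ^ (k - j.val) else 0)]
        exact Finset.sum_congr rfl fun v _ => by simp [hw1, Equiv.subRight]; rfl
      rw [e1, Fin.sum_univ_eq_sum_range
        (fun j => if 1 ≤ j ∧ j ≤ k then 2 ^ (k - j) else 0)]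
      exact strat_sum_one k (2 * k) (by omega)
    have hsum2 : (∑ v, w2 v) = 2 ^ k - 1 := by
      have e1 : (∑ v, w2 v) = ∑ j : Fin (2 * k),
          (if k ≤ j.val then 2 ^ (j.val - k) else 0) := by
        rw [← Equiv.sum_comp (Equiv.subRight r)
          (fun j : Fin (2 * k) => if k ≤ j.val then 2 ^ (j.val - k) else 0)]
        exact Finset.sum_congr rfl fun v _ => by simp [hw2, Equiv.subRight]; rfl
      rw [e1, Fin.sum_univ_eq_sum_range (fun j => if k ≤ j then 2 ^ (j - k) else 0)]
      have : 2 * k = k + k := by ring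
      rw [this]
      exact strat_sum_two k k
    -- strategy condition for w1 (push toward r with decreasing relative position)
    have H1 : ∀ v, w1 v ≠ 0 → ∃ u, (SimpleGraph.cycleGraph (2 * k)).Adj v u ∧
        (u = r ∨ 2 * w1 v ≤ w1 u) := by
      intro v hv
      have hj : 1 ≤ (v - r).val ∧ (v - r).val ≤ k := by
        by_contra hc
        apply hv
        simp only [hw1, if_neg hc]
      refine ⟨v - 1, ?_, ?_⟩
      · have := cycle_adj_succ hn2 (v - 1)
        rwa [sub_add_cancel] at this
      · have hsub : v - 1 - r = (v - r) - 1 := by abel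
        by_cases h1 : (v - r).val = 1
        · left
          have hvr : v - r = 1 := Fin.ext (by rw [h1, fin_val_one hn2])
          have : v - 1 - r = 0 := by rw [hsub, hvr]; exact sub_self 1
          exact sub_eq_zero.mp this
        · right
          have h2le : 2 ≤ (v - r).val := by omega
          have hval : (v - 1 - r).val = (v - r).val - 1 := by
            rw [hsub, fin_val_sub_one hn2 _ (by omega)]
          have hcond : 1 ≤ (v - 1 - r).val ∧ (v - 1 - r).val ≤ k := by
            rw [hval]; omega
          simp only [hw1, if_pos hj, if_pos hcond, hval]
          have hexp : k - ((v - r).val - 1) = (k - (v - r).val) + 1 := by omega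
          rw [hexp, pow_succ]
          omega
    -- strategy condition for w2 (push toward r with increasing relative position)
    have H2 : ∀ v, w2 v ≠ 0 → ∃ u, (SimpleGraph.cycleGraph (2 * k)).Adj v u ∧
        (u = r ∨ 2 * w2 v ≤ w2 u) := by
      intro v hv
      have hj : k ≤ (v - r).val := by
        by_contra hc
        apply hv
        simp only [hw2, if_neg hc]
      refine ⟨v + 1, (cycle_adj_succ hn2 v).symm, ?_⟩
      have hsub : v + 1 - r = (v - r) + 1 := by abel
      have hjlt : (v - r).val < 2 * k := (v - r).isLt
      by_cases h1 : (v - r).val = 2 * k - 1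
      · left
        have : v + 1 - r = 0 := by
          rw [hsub]
          apply Fin.ext
          rw [fin_val_add_one, h1]
          have h2 : 2 * k - 1 + 1 = 2 * k := by omega
          rw [h2, Nat.mod_self]
          rfl
        exact sub_eq_zero.mp this
      · right
        have hval : (v + 1 - r).val = (v - r).val + 1 := by
          rw [hsub, fin_val_add_one, Nat.mod_eq_of_lt (by omega)]
        have hcond : k ≤ (v + 1 - r).val := by rw [hval]; omega
        simp only [hw2, if_pos hj, if_pos hcond, hval]
        have hexp : (v - r).val + 1 - k = ((v - r).val - k) + 1 := by omega
        rw [hexp, pow_succ]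
        omega
    -- total weight counting
    have htot : 2 * 2 ^ k ≤ (∑ v, w1 v * D v) + ∑ v, w2 v * D v := by
      have hptw : ∀ v, 2 * D v ≤ w1 v * D v + w2 v * D v := by
        intro v
        by_cases hvr : v = r
        · subst hvr; rw [hDr]; simp
        · have hj0 : v - r ≠ 0 := fun h => hvr (sub_eq_zero.mp h)
          have hj1 : 1 ≤ (v - r).val := by
            rcases Nat.eq_zero_or_pos (v - r).val with h | h
            · exact absurd (Fin.ext (by simp [h])) hj0
            · omega
          have hjlt : (v - r).val < 2 * k := (v - r).isLt
          have hge2 : 2 ≤ w1 v + w2 v := by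
            rcases lt_trichotomy (v - r).val k with h | h | h
            · have : w1 v = 2 ^ (k - (v - r).val) := by
                simp only [hw1, if_pos (by omega : 1 ≤ (v - r).val ∧ (v - r).val ≤ k)]
              have h2 : 2 ^ 1 ≤ 2 ^ (k - (v - r).val) :=
                Nat.pow_le_pow_right (by omega) (by omega)
              omega
            · have e1 : w1 v = 1 := by
                simp only [hw1, if_pos (by omega : 1 ≤ (v - r).val ∧ (v - r).val ≤ k), h]
                simp
              have e2 : w2 v = 1 := by
                simp only [hw2, if_pos (by omega : k ≤ (v - r).val), h]
                simp
              omega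
            · have : w2 v = 2 ^ ((v - r).val - k) := by
                simp only [hw2, if_pos (by omega : k ≤ (v - r).val)]
              have h2 : 2 ^ 1 ≤ 2 ^ ((v - r).val - k) :=
                Nat.pow_le_pow_right (by omega) (by omega)
              omega
          calc 2 * D v ≤ (w1 v + w2 v) * D v := Nat.mul_le_mul_right _ hge2
            _ = w1 v * D v + w2 v * D v := by ring
      calc 2 * 2 ^ k = ∑ v, 2 * D v := by rw [← Finset.mul_sum, hD]
        _ ≤ ∑ v, (w1 v * D v + w2 v * D v) := Finset.sum_le_sum fun v _ => hptw v
        _ = (∑ v, w1 v * D v) + ∑ v, w2 v * D v := Finset.sum_add_distrib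
    have hcase : (∑ v, w1 v) < (∑ v, w1 v * D v) ∨ (∑ v, w2 v) < (∑ v, w2 v * D v) := by
      rw [hsum1, hsum2]
      omega
    rcases hcase with h | h
    · exact gen_solvable w1 r H1 _ D rfl h
    · exact gen_solvable w2 r H2 _ D rfl h
  -- Lower bound: for t < 2^k there is an unsolvable distribution of size t
  have lower : ∀ t, t < 2 ^ k → ∃ (D : Fin (2 * k) → ℕ) (r : Fin (2 * k)),
      (∑ v, D v) = t ∧ ¬ PebSolvable (SimpleGraph.cycleGraph (2 * k)) D r := by
    intro t ht
    set mid : Fin (2 * k) := ⟨k, by omega⟩ with hmid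
    set wd : Fin (2 * k) → ℕ :=
      fun v => 2 ^ (k - min v.val (2 * k - v.val)) with hwd
    refine ⟨fun v => if v = mid then t else 0, 0, by simp, ?_⟩
    rintro ⟨D', hsteps, hr⟩
    have hw : ∀ u v, (SimpleGraph.cycleGraph (2 * k)).Adj u v → wd v ≤ 2 * wd u := by
      intro u v hadj
      have hc := cycle_adj_cases hn2 hadj
      have hval : u.val = (v.val + 1) % (2 * k) ∨ v.val = (u.val + 1) % (2 * k) := by
        rcases hc with h | h
        · left; rw [h, fin_val_add_one]
        · right; rw [h, fin_val_add_one]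
      have hmd := md_step k u.val v.val u.isLt v.isLt hval
      simp only [hwd]
      calc 2 ^ (k - min v.val (2 * k - v.val))
          ≤ 2 ^ ((k - min u.val (2 * k - u.val)) + 1) :=
            Nat.pow_le_pow_right (by omega) hmd
        _ = 2 * 2 ^ (k - min u.val (2 * k - u.val)) := by rw [pow_succ]; ring
    have hmono := weight_mono wd hw hsteps
    have hWinit : (∑ x, wd x * (if x = mid then t else 0)) = t := by
      have : ∀ x, wd x * (if x = mid then t else 0) = if x = mid then wd mid * t else 0 := by
        intro x
        by_cases hx : x = mid
        · subst hx; simp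
        · simp [hx]
      rw [Finset.sum_congr rfl fun x _ => this x,
        Finset.sum_ite_eq' Finset.univ mid (fun _ => wd mid * t)]
      have : wd mid = 1 := by
        simp only [hwd, hmid]
        have : min k (2 * k - k) = k := by omega
        rw [this]
        simp
      simp [this]
    have hWfin : 2 ^ k ≤ ∑ x, wd x * D' x := by
      have h0 : wd 0 * D' 0 ≤ ∑ x, wd x * D' x :=
        Finset.single_le_sum (f := fun x => wd x * D' x)
          (fun x _ => Nat.zero_le _) (Finset.mem_univ 0)
      have : wd 0 = 2 ^ k := by
        simp only [hwd]
        have h00 : (0 : Fin (2 * k)).val = 0 := rfl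
        rw [h00]
        simp
      rw [this] at h0
      calc 2 ^ k = 2 ^ k * 1 := by ring
        _ ≤ 2 ^ k * D' 0 := Nat.mul_le_mul_left _ hr
        _ ≤ ∑ x, wd x * D' x := h0
    omega
  -- Assemble
  apply le_antisymm
  · exact Nat.sInf_le (by intro D r hD; exact upper D r hD)
  · apply le_csInf ⟨2 ^ k, by intro D r hD; exact upper D r hD⟩
    intro t ht
    by_contra hlt
    push_neg at hlt
    obtain ⟨D, r, hsum, hnsolv⟩ := lower t hlt
    exact hnsolv (ht D r hsum)
end

section
/- For k ≥ 1, the pebbling number of the odd cycle C_{2k+1} equals 2·⌊2^{k+1}/3⌋ + 1. -/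
set_option linter.unusedSectionVars false
set_option maxHeartbeats 1000000

namespace PebAux

variable {V : Type*} [DecidableEq V] {G : SimpleGraph V}

/-- greedy value toward the head of the list -/
def gval (D : V → ℕ) : List V → ℕ
  | [] => 0
  | v :: t => D v + gval D t / 2

@[simp] lemma gval_nil (D : V → ℕ) : gval D [] = 0 := rfl
@[simp] lemma gval_cons (D : V → ℕ) (v : V) (t : List V) :
    gval D (v :: t) = D v + gval D t / 2 := rfl

lemma gval_congr {D D' : V → ℕ} {l : List V} (h : ∀ v ∈ l, D v = D' v) :
    gval D l = gval D' l := by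
  induction l with
  | nil => rfl
  | cons v t ih => simp [h v (by simp), ih (fun w hw => h w (by simp [hw]))]

lemma le_gval_head (D : V → ℕ) (v : V) (t : List V) : D v ≤ gval D (v :: t) :=
  Nat.le_add_right _ _

lemma gval_zero {D : V → ℕ} {l : List V} (h : ∀ v ∈ l, D v = 0) : gval D l = 0 := by
  induction l with
  | nil => rfl
  | cons v t ih => simp [h v (by simp), ih (fun w hw => h w (by simp [hw]))]

lemma gval_zero_prefix {D : V → ℕ} (p : List V) (h : ∀ v ∈ p, D v = 0) (q : List V) :
    gval D (p ++ q) = gval D q / 2 ^ p.length := by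
  induction p with
  | nil => simp
  | cons v t ih =>
    simp only [List.cons_append, gval_cons, h v (by simp),
      ih (fun w hw => h w (by simp [hw])), List.length_cons]
    rw [Nat.div_div_eq_div_mul, pow_succ]
    omega

lemma gval_mono_prefix {D D' : V → ℕ} (p : List V) {m : List V}
    (hp : ∀ v ∈ p, D' v = D v) (h : gval D' m ≤ gval D m) :
    gval D' (p ++ m) ≤ gval D (p ++ m) := by
  induction p with
  | nil => exact h
  | cons v t ih =>
    simp only [List.cons_append, gval_cons, hp v (by simp)]
    have := ih (fun w hw => hp w (by simp [hw]))
    omega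
/-- the key monotonicity: a pebbling step between two consecutive list vertices
does not increase the greedy value. -/
lemma gval_step {D : V → ℕ} {u v x y : V} (p q : List V)
    (hnd : (p ++ x :: y :: q).Nodup)
    (huv : (u = x ∧ v = y) ∨ (u = y ∧ v = x)) (h2 : 2 ≤ D u) :
    gval (Function.update (Function.update D u (D u - 2)) v (D v + 1)) (p ++ x :: y :: q)
      ≤ gval D (p ++ x :: y :: q) := by
  set D' := Function.update (Function.update D u (D u - 2)) v (D v + 1) with hD'
  have hxy : x ≠ y := by
    have := hnd.of_append_right
    simp at this; tauto
  have hxp : x ∉ p := by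
    rw [List.nodup_append] at hnd
    intro hc; exact hnd.2.2 x hc x (by simp) rfl
  have hyp : y ∉ p := by
    rw [List.nodup_append] at hnd
    intro hc; exact hnd.2.2 y hc y (by simp) rfl
  have hxq : x ∉ q := by
    have := hnd.of_append_right
    simp at this; tauto
  have hyq : y ∉ q := by
    have := hnd.of_append_right
    simp at this; tauto
  have huvne : u ≠ v := by rcases huv with ⟨rfl, rfl⟩ | ⟨rfl, rfl⟩ <;> simp [hxy, hxy.symm]
  have hDq : ∀ w ∈ q, D' w = D w := by
    intro w hw
    have hwx : w ≠ x := fun h => hxq (h ▸ hw)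
    have hwy : w ≠ y := fun h => hyq (h ▸ hw)
    rcases huv with ⟨rfl, rfl⟩ | ⟨rfl, rfl⟩ <;>
      simp [hD', Function.update_of_ne, hwx, hwy]
  have hq : gval D' q = gval D q := gval_congr hDq
  apply gval_mono_prefix
  · intro w hw
    have hwx : w ≠ x := fun h => hxp (h ▸ hw)
    have hwy : w ≠ y := fun h => hyp (h ▸ hw)
    rcases huv with ⟨rfl, rfl⟩ | ⟨rfl, rfl⟩ <;>
      simp [hD', Function.update_of_ne, hwx, hwy]
  · simp only [gval_cons, hq]
    rcases huv with ⟨rfl, rfl⟩ | ⟨rfl, rfl⟩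
    · have h1 : D' u = D u - 2 := by
        rw [hD', Function.update_of_ne huvne, Function.update_self]
      have h2' : D' v = D v + 1 := by rw [hD', Function.update_self]
      rw [h1, h2']
      omega
    · have h1 : D' u = D u - 2 := by
        rw [hD', Function.update_of_ne huvne, Function.update_self]
      have h2' : D' v = D v + 1 := by rw [hD', Function.update_self]
      rw [h1, h2']
      omega


/-- moving s pebbles across an edge -/
lemma moves {u v : V} (h : G.Adj u v) :
    ∀ (s : ℕ) (D : V → ℕ), 2 * s ≤ D u →
    ∃ E, Relation.ReflTransGen (PebStep G) D E ∧ E v = D v + s ∧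
      ∀ w, w ≠ u → w ≠ v → E w = D w := by
  intro s
  induction s with
  | zero => intro D _; exact ⟨D, .refl, by simp, fun _ _ _ => rfl⟩
  | succ s ih =>
    intro D hD
    set D1 := Function.update (Function.update D u (D u - 2)) v (D v + 1) with hD1
    have hstep : PebStep G D D1 := ⟨u, v, h, by omega, rfl⟩
    have hne : u ≠ v := h.ne
    have h1u : D1 u = D u - 2 := by
      rw [hD1, Function.update_of_ne hne, Function.update_self]
    have h1v : D1 v = D v + 1 := by rw [hD1, Function.update_self]
    obtain ⟨E, hE, hEv, hEw⟩ := ih D1 (by omega)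
    refine ⟨E, .head hstep hE, ?_, ?_⟩
    · rw [hEv, h1v]; omega
    · intro w hwu hwv
      rw [hEw w hwu hwv, hD1, Function.update_of_ne hwv, Function.update_of_ne hwu]

/-- the greedy value is achievable by legal pebbling moves -/
lemma achieve : ∀ (l : List V) (v : V), (v :: l).Chain' G.Adj → (v :: l).Nodup →
    ∀ D : V → ℕ,
    ∃ E, Relation.ReflTransGen (PebStep G) D E ∧ gval D (v :: l) ≤ E v ∧
      ∀ w, w ∉ (v :: l) → E w = D w := by
  intro l
  induction l with
  | nil =>
    intro v _ _ D
    exact ⟨D, .refl, by simp, fun _ _ => rfl⟩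
  | cons x t ih =>
    intro v hc hnd D
    have hadj : G.Adj v x := (List.isChain_cons_cons.mp hc).1
    obtain ⟨E1, hE1, hgE1, hoff1⟩ := ih x (List.isChain_cons_cons.mp hc).2 hnd.of_cons D
    have hvE1 : E1 v = D v := hoff1 v (by simp at hnd ⊢; tauto)
    set s := gval D (x :: t) / 2 with hs
    obtain ⟨E, hE, hEv, hEw⟩ := moves (G := G) hadj.symm s E1 (by omega)
    refine ⟨E, hE1.trans hE, ?_, ?_⟩
    · rw [hEv, hvE1, gval_cons]
    · intro w hw
      simp only [List.mem_cons, not_or] at hw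
      rw [hEw w hw.2.1 hw.1, hoff1 w (by simp; tauto)]

/-- weighted sum: weight 2^(position from the end) -/
def wsumA (D : V → ℕ) : List V → ℕ
  | [] => 0
  | v :: t => D v * 2 ^ t.length + wsumA D t

@[simp] lemma wsumA_nil (D : V → ℕ) : wsumA D [] = 0 := rfl
@[simp] lemma wsumA_cons (D : V → ℕ) (v : V) (t : List V) :
    wsumA D (v :: t) = D v * 2 ^ t.length + wsumA D t := rfl

lemma wsumA_le_gval (D : V → ℕ) (l : List V) :
    2 * wsumA D l + 2 ≤ 2 ^ l.length * (gval D l + 1) + 1 := by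
  induction l with
  | nil => simp
  | cons v t ih =>
    simp only [wsumA_cons, gval_cons, List.length_cons]
    set g := gval D t with hg
    set P := (2:ℕ) ^ t.length with hP
    have hgd : g ≤ 2 * (g / 2) + 1 := by omega
    have key : P * (g + 1) ≤ 2 * P * (g / 2 + 1) := by
      calc P * (g + 1) ≤ P * (2 * (g/2) + 2) := Nat.mul_le_mul_left _ (by omega)
        _ = 2 * P * (g / 2 + 1) := by ring
    calc 2 * (D v * P + wsumA D t) + 2 = 2 * P * D v + (2 * wsumA D t + 2) := by ring
      _ ≤ 2 * P * D v + (P * (g + 1) + 1) := by omega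
      _ ≤ 2 * P * D v + (2 * P * (g/2 + 1) + 1) := by omega
      _ = 2 ^ (t.length + 1) * (D v + g / 2 + 1) + 1 := by rw [pow_succ]; ring

lemma wsumA_append_singleton (D : V → ℕ) (l : List V) (x : V) :
    wsumA D (l ++ [x]) = 2 * wsumA D l + D x := by
  induction l with
  | nil => simp [wsumA]
  | cons v t ih =>
    simp only [List.cons_append, wsumA_cons, ih, List.length_append, List.length_singleton,
      pow_succ]
    ring


lemma arith (k : ℕ) (hk : 1 ≤ k) (a : ℕ → ℕ)
    (hA : ∑ i ∈ Finset.range (2*k), a i * 2 ^ (2*k - 1 - i) ≤ 2 ^ (2*k) - 1)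
    (hB : ∑ i ∈ Finset.range (2*k), a i * 2 ^ i ≤ 2 ^ (2*k) - 1) :
    ∑ i ∈ Finset.range (2*k), a i ≤ 2 * (2 ^ (k+1) / 3) := by
  set m := 2 ^ (k+1) / 3 with hm
  set r := 2 ^ (k+1) % 3 with hr
  have h3 : ¬ (3 ∣ 2^(k+1)) := by
    intro h
    have := Nat.Prime.dvd_of_dvd_pow (p := 3) (by norm_num) h
    omega
  have hdm := Nat.div_add_mod (2^(k+1)) 3
  have hmr : 3 * m + r = 2^(k+1) := by omega
  have hrne : r ≠ 0 := fun h => h3 (Nat.dvd_of_mod_eq_zero (hr ▸ h))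
  have hrlt : r < 3 := Nat.mod_lt _ (by norm_num)
  by_contra hcon
  push_neg at hcon
  set S := ∑ i ∈ Finset.range (2*k), a i with hS
  by_cases hmid : ∀ i ∈ Finset.range (2*k), i ≠ k-1 → i ≠ k → a i = 0
  case pos =>
    have hsub : ({k-1, k} : Finset ℕ) ⊆ Finset.range (2*k) := by
      intro i hi
      simp only [Finset.mem_insert, Finset.mem_singleton] at hi
      rcases hi with rfl | rfl <;> simp only [Finset.mem_range] <;> omega
    have hkk : (k-1) ≠ k := by omega
    have hzero : ∀ (f : ℕ → ℕ), (∀ i, a i = 0 → f i = 0) →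
        ∑ i ∈ Finset.range (2*k), f i = f (k-1) + f k := by
      intro f hf
      rw [← Finset.sum_subset hsub (fun i hi hni => by
        apply hf
        apply hmid i hi <;> intro h <;> exact hni (by simp [h]))]
      rw [Finset.sum_pair hkk]
    have eA : ∑ i ∈ Finset.range (2*k), a i * 2 ^ (2*k-1-i)
        = a (k-1) * 2 ^ (2*k-1-(k-1)) + a k * 2 ^ (2*k-1-k) :=
      hzero (fun i => a i * 2 ^ (2*k-1-i)) (fun i h => by simp [h])
    have eB : ∑ i ∈ Finset.range (2*k), a i * 2 ^ i
        = a (k-1) * 2 ^ (k-1) + a k * 2 ^ k :=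
      hzero (fun i => a i * 2 ^ i) (fun i h => by simp [h])
    have eS : S = a (k-1) + a k := hzero a (fun i h => h)
    rw [eA, show 2*k-1-(k-1) = k from by omega, show 2*k-1-k = k-1 from by omega] at hA
    rw [eB] at hB
    set P := (2:ℕ)^(k-1) with hP
    have hP1 : 1 ≤ P := Nat.one_le_two_pow
    have ek : (2:ℕ)^k = 2*P := by
      rw [hP, ← pow_succ']
      congr 1
      omega
    have ek1 : (2:ℕ)^(k+1) = 4*P := by
      rw [hP, show k+1 = (k-1)+2 from by omega, pow_add]
      ring
    have e2k : (2:ℕ)^(2*k) = 4*(P*P) := by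
      rw [hP, show 2*k = (k-1)+((k-1)+2) from by omega, pow_add, pow_add]
      ring
    rw [ek, e2k] at hA hB
    -- hA : a (k-1) * (2*P) + a k * P ≤ 4*(P*P) - 1
    -- hB : a (k-1) * P + a k * (2*P) ≤ 4*(P*P) - 1
    have hPP : 1 ≤ P*P := Nat.one_le_iff_ne_zero.mpr (by positivity)
    have c1 : P*(2*(a (k-1)) + a k) = a (k-1) * (2*P) + a k * P := by ring
    have c2 : P*(a (k-1) + 2*(a k)) = a (k-1) * P + a k * (2*P) := by ring
    have c3 : P*(4*P) = 4*(P*P) := by ring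
    have h1 : 2*(a (k-1)) + a k ≤ 4*P - 1 := by
      by_contra hcc
      push_neg at hcc
      have h4 : 4*P ≤ 2*(a (k-1)) + a k := by omega
      have h5 : P*(4*P) ≤ P*(2*(a (k-1)) + a k) := Nat.mul_le_mul_left _ h4
      rw [c3, c1] at h5
      omega
    have h2 : a (k-1) + 2*(a k) ≤ 4*P - 1 := by
      by_contra hcc
      push_neg at hcc
      have h4 : 4*P ≤ a (k-1) + 2*(a k) := by omega
      have h5 : P*(4*P) ≤ P*(a (k-1) + 2*(a k)) := Nat.mul_le_mul_left _ h4
      rw [c3, c2] at h5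
      omega
    rw [ek1] at hmr
    omega
  case neg =>
    push_neg at hmid
    obtain ⟨i0, hi0mem, hi0a, hi0b, hi0⟩ := hmid
    have hi0lt : i0 < 2*k := Finset.mem_range.mp hi0mem
    have hk2 : 2 ≤ k := by omega
    set Q := (2:ℕ)^(k-2) with hQ
    have hQ1 : 1 ≤ Q := Nat.one_le_two_pow
    have ek1' : (2:ℕ)^(k-1) = 2*Q := by
      rw [hQ, show k-1 = (k-2)+1 from by omega, pow_succ]; ring
    have ek1 : (2:ℕ)^(k+1) = 8*Q := by
      rw [hQ, show k+1 = (k-2)+3 from by omega, pow_add]; ring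
    have ek2 : (2:ℕ)^(k+2) = 16*Q := by
      rw [hQ, show k+2 = (k-2)+4 from by omega, pow_add]; ring
    have e2k : (2:ℕ)^(2*k) = 16*(Q*Q) := by
      rw [hQ, show 2*k = (k-2)+((k-2)+4) from by omega, pow_add, pow_add]; ring
    have epow : (2:ℕ)^k = 2*2^(k-1) := by
      rw [← pow_succ']; congr 1; omega
    have hc1 : ∀ i ∈ Finset.range (2*k), 3*2^(k-1) ≤ 2^(2*k-1-i) + 2^i := by
      intro i hi
      rw [Finset.mem_range] at hi
      by_cases h1 : i = k-1
      · subst h1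
        rw [show 2*k-1-(k-1) = k from by omega, epow]
        omega
      by_cases h2 : i = k
      · rw [h2, show 2*k-1-k = k-1 from by omega, epow]
        omega
      · have h4 : (3:ℕ)*2^(k-1) ≤ 2^(k+1) := by
          have e : (2:ℕ)^(k+1) = 4*2^(k-1) := by
            rw [show k+1 = (k-1)+2 from by omega, pow_add]; ring
          rw [e]
          omega
        have hor : k+1 ≤ i ∨ k+1 ≤ 2*k-1-i := by omega
        rcases hor with h | h
        · exact le_trans h4 (le_trans (Nat.pow_le_pow_right (by norm_num) h) (Nat.le_add_left _ _))
        · exact le_trans h4 (le_trans (Nat.pow_le_pow_right (by norm_num) h) (Nat.le_add_right _ _))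
    have hc2 : 3*2^(k-1) + 3*2^(k-2) ≤ 2^(2*k-1-i0) + 2^i0 := by
      have hor : i0 = k+1 ∨ i0 = k-2 ∨ k+2 ≤ i0 ∨ k+2 ≤ 2*k-1-i0 := by omega
      rcases hor with h | h | h | h
      · rw [h, show 2*k-1-(k+1) = k-2 from by omega, ek1', ← hQ, ek1]
        omega
      · rw [h, show 2*k-1-(k-2) = k+1 from by omega, ek1', ← hQ, ek1]
        omega
      · have h16 : (2:ℕ)^(k+2) ≤ 2^i0 := Nat.pow_le_pow_right (by norm_num) h
        rw [ek2] at h16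
        have h9 : 3*2^(k-1) + 3*2^(k-2) ≤ 16*Q := by rw [ek1', ← hQ]; omega
        exact le_trans h9 (le_trans h16 (Nat.le_add_left _ _))
      · have h16 : (2:ℕ)^(k+2) ≤ 2^(2*k-1-i0) := Nat.pow_le_pow_right (by norm_num) h
        rw [ek2] at h16
        have h9 : 3*2^(k-1) + 3*2^(k-2) ≤ 16*Q := by rw [ek1', ← hQ]; omega
        exact le_trans h9 (le_trans h16 (Nat.le_add_right _ _))
    have hE1 : 1 ≤ (2:ℕ)^(2*k) := Nat.one_le_two_pow
    have hAB : ∑ i ∈ Finset.range (2*k), a i * (2^(2*k-1-i) + 2^i) ≤ 2*2^(2*k) - 2 := by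
      have h := add_le_add hA hB
      rw [← Finset.sum_add_distrib] at h
      calc ∑ i ∈ Finset.range (2*k), a i * (2^(2*k-1-i) + 2^i)
          = ∑ i ∈ Finset.range (2*k), (a i * 2^(2*k-1-i) + a i * 2^i) := by
            apply Finset.sum_congr rfl; intros; rw [mul_add]
        _ ≤ (2^(2*k) - 1) + (2^(2*k) - 1) := h
        _ = 2*2^(2*k) - 2 := by omega
    have hsplit : ∑ i ∈ Finset.range (2*k), a i * (2^(2*k-1-i) + 2^i)
        = S * (3*2^(k-1)) + ∑ i ∈ Finset.range (2*k), a i * ((2^(2*k-1-i) + 2^i) - 3*2^(k-1)) := by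
      rw [hS, Finset.sum_mul, ← Finset.sum_add_distrib]
      apply Finset.sum_congr rfl
      intro i hi
      rw [← mul_add, Nat.add_sub_cancel' (hc1 i hi)]
    have hsingle : 3*2^(k-2) ≤ ∑ i ∈ Finset.range (2*k), a i * ((2^(2*k-1-i) + 2^i) - 3*2^(k-1)) := by
      have h1 : a i0 * ((2^(2*k-1-i0) + 2^i0) - 3*2^(k-1))
          ≤ ∑ i ∈ Finset.range (2*k), a i * ((2^(2*k-1-i) + 2^i) - 3*2^(k-1)) :=
        Finset.single_le_sum (f := fun i => a i * ((2^(2*k-1-i) + 2^i) - 3*2^(k-1)))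
          (fun i _ => Nat.zero_le _) hi0mem
      have ha1 : 1 ≤ a i0 := Nat.one_le_iff_ne_zero.mpr hi0
      have h2 : 3*2^(k-2) ≤ (2^(2*k-1-i0) + 2^i0) - 3*2^(k-1) :=
        Nat.le_sub_of_add_le (by linarith [hc2])
      calc 3*2^(k-2) ≤ 1 * ((2^(2*k-1-i0) + 2^i0) - 3*2^(k-1)) := by rw [one_mul]; exact h2
        _ ≤ a i0 * ((2^(2*k-1-i0) + 2^i0) - 3*2^(k-1)) := Nat.mul_le_mul_right _ ha1
        _ ≤ _ := h1
    have key : S * (6*Q) + 3*Q ≤ 32*(Q*Q) - 2 := by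
      rw [hsplit] at hAB
      have h1 : S*(3*2^(k-1)) + 3*2^(k-2) ≤ 2*2^(2*k) - 2 := by linarith [hAB, hsingle]
      have e6 : S*(3*2^(k-1)) = S*(6*Q) := by rw [ek1']; ring
      have e32 : 2*2^(2*k) = 32*(Q*Q) := by rw [e2k]; ring
      rw [e6, e32, ← hQ] at h1
      exact h1
    rw [ek1] at hmr
    have h16 : 16*Q ≤ 3*S + 1 := by omega
    have e1 : Q*(16*Q) ≤ Q*(3*S+1) := Nat.mul_le_mul_left _ h16
    have n1 : Q*(16*Q) = 16*(Q*Q) := by ring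
    have n2 : Q*(3*S+1) = 3*(Q*S) + Q := by ring
    have n3 : S*(6*Q) = 6*(Q*S) := by ring
    rw [n1, n2] at e1
    rw [n3] at key
    have hQQ : 1 ≤ Q*Q := Nat.one_le_iff_ne_zero.mpr (by positivity)
    generalize hu : Q*Q = u at e1 key hQQ
    generalize hv : Q*S = v at e1 key
    omega


variable {k : ℕ}
open Fin.NatCast Fin.CommRing
/-- the i-th vertex on the path around the cycle starting after r -/
def fv (k : ℕ) (r : Fin (2*k+1)) (i : ℕ) : Fin (2*k+1) := r + ((i+1 : ℕ) : Fin (2*k+1))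

lemma val_cast (i : ℕ) (h : i ≤ 2*k) : ((i : ℕ) : Fin (2*k+1)).val = i := by
  rw [Fin.val_natCast]
  exact Nat.mod_eq_of_lt (by omega)

lemma cast_inj {i j : ℕ} (hi : i ≤ 2*k) (hj : j ≤ 2*k)
    (h : ((i : ℕ) : Fin (2*k+1)) = j) : i = j := by
  have := congrArg Fin.val h
  rwa [val_cast i hi, val_cast j hj] at this

lemma fv_inj {r : Fin (2*k+1)} {i j : ℕ} (hi : i < 2*k) (hj : j < 2*k)
    (h : fv k r i = fv k r j) : i = j := by
  have h2 : ((i+1 : ℕ) : Fin (2*k+1)) = ((j+1 : ℕ) : Fin (2*k+1)) := by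
    have := add_left_cancel h
    exact this
  have := cast_inj (by omega) (by omega) h2
  omega

lemma fv_ne_root {r : Fin (2*k+1)} {i : ℕ} (hi : i < 2*k) : fv k r i ≠ r := by
  intro h
  have h2 : ((i+1 : ℕ) : Fin (2*k+1)) = 0 := by
    have : r + ((i+1 : ℕ) : Fin (2*k+1)) = r + 0 := by rw [add_zero]; exact h
    exact add_left_cancel this
  have := congrArg Fin.val h2
  rw [val_cast (i+1) (by omega)] at this
  simp at this
lemma fv_surj {r v : Fin (2*k+1)} (h : v ≠ r) : ∃ i, i < 2*k ∧ v = fv k r i := by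
  refine ⟨(v - r).val - 1, ?_, ?_⟩
  · have h1 : (v - r).val < 2*k+1 := (v - r).isLt
    have h2 : (v - r).val ≠ 0 := by
      intro hc
      apply h
      have : v - r = 0 := Fin.ext hc
      have := sub_eq_zero.mp this
      exact this
    omega
  · have h2 : (v - r).val ≠ 0 := by
      intro hc
      exact h (sub_eq_zero.mp (Fin.ext hc))
    rw [fv, show (v-r).val - 1 + 1 = (v-r).val from by omega, Fin.cast_val_eq_self]
    abel

lemma adj_fv_succ {r : Fin (2*k+1)} (hk : 1 ≤ k) {i : ℕ} (hi : i + 1 < 2*k) :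
    (SimpleGraph.cycleGraph (2*k+1)).Adj (fv k r i) (fv k r (i+1)) := by
  rw [SimpleGraph.cycleGraph_adj']
  right
  have : fv k r (i+1) - fv k r i = ((i+1+1 : ℕ) : Fin (2*k+1)) - ((i+1 : ℕ) : Fin (2*k+1)) := by
    rw [fv, fv]; abel
  rw [this]
  have e : ((i+1+1 : ℕ) : Fin (2*k+1)) - ((i+1 : ℕ) : Fin (2*k+1)) = 1 := by
    push_cast
    ring
  rw [e]
  rw [Fin.val_one']
  exact Nat.mod_eq_of_lt (by omega)

lemma adj_root_fv0 {r : Fin (2*k+1)} (hk : 1 ≤ k) :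
    (SimpleGraph.cycleGraph (2*k+1)).Adj r (fv k r 0) := by
  rw [SimpleGraph.cycleGraph_adj']
  right
  have : fv k r 0 - r = ((1:ℕ) : Fin (2*k+1)) := by rw [fv]; push_cast; abel
  rw [this]
  push_cast
  rw [Fin.val_one']
  exact Nat.mod_eq_of_lt (by omega)

lemma adj_root_fvlast {r : Fin (2*k+1)} (hk : 1 ≤ k) :
    (SimpleGraph.cycleGraph (2*k+1)).Adj (fv k r (2*k-1)) r := by
  rw [SimpleGraph.cycleGraph_adj']
  right
  have : r - fv k r (2*k-1) = 1 := by
    rw [fv, show 2*k-1+1 = 2*k from by omega]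
    have h0 : ((2*k : ℕ) : Fin (2*k+1)) + 1 = 0 := by
      have : ((2*k+1 : ℕ) : Fin (2*k+1)) = 0 := by
        exact_mod_cast Fin.natCast_self (2*k+1)
      push_cast at this ⊢
      linear_combination this
    have : ((2*k : ℕ) : Fin (2*k+1)) = -1 := by linear_combination h0
    rw [this]
    abel
  rw [this]
  rw [Fin.val_one']
  exact Nat.mod_eq_of_lt (by omega)

lemma adj_root_cases {r v : Fin (2*k+1)} (hk : 1 ≤ k)
    (h : (SimpleGraph.cycleGraph (2*k+1)).Adj v r) : v = fv k r 0 ∨ v = fv k r (2*k-1) := by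
  rw [SimpleGraph.cycleGraph_adj'] at h
  rcases h with h | h
  · -- (v - r).val = 1 : v = r + 1 = fv 0
    left
    have : v - r = 1 := by
      apply Fin.ext
      rw [h, Fin.val_one']
      exact (Nat.mod_eq_of_lt (by omega)).symm
    have hv : v = r + 1 := by linear_combination this
    rw [hv, fv]
    push_cast
    ring
  · -- (r - v).val = 1 : v = r - 1 = fv (2k-1)
    right
    have : r - v = 1 := by
      apply Fin.ext
      rw [h, Fin.val_one']
      exact (Nat.mod_eq_of_lt (by omega)).symm
    have hv : v = r - 1 := by linear_combination -this
    rw [hv, fv, show 2*k-1+1 = 2*k from by omega]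
    have h0 : ((2*k : ℕ) : Fin (2*k+1)) = -1 := by
      have h1 : ((2*k+1 : ℕ) : Fin (2*k+1)) = 0 := by
        exact_mod_cast Fin.natCast_self (2*k+1)
      push_cast at h1 ⊢
      linear_combination h1
    rw [h0]
    ring

lemma adj_fv_fv {r : Fin (2*k+1)} (hk : 1 ≤ k) {i j : ℕ} (hi : i < 2*k) (hj : j < 2*k)
    (h : (SimpleGraph.cycleGraph (2*k+1)).Adj (fv k r i) (fv k r j)) :
    j = i + 1 ∨ i = j + 1 := by
  rw [SimpleGraph.cycleGraph_adj'] at h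
  have key : ∀ a b : ℕ, a < 2*k → b < 2*k → (fv k r a - fv k r b).val = 1 → a = b + 1 := by
    intro a b ha hb hab
    have h1 : fv k r a - fv k r b = 1 := by
      apply Fin.ext
      rw [hab, Fin.val_one']
      exact (Nat.mod_eq_of_lt (by omega)).symm
    have h2 : ((a+1 : ℕ) : Fin (2*k+1)) = ((b+1+1 : ℕ) : Fin (2*k+1)) := by
      rw [fv, fv] at h1
      push_cast at h1 ⊢
      linear_combination h1
    have h3 := congrArg Fin.val h2
    rw [val_cast (a+1) (by omega), Fin.val_natCast] at h3
    by_cases hc : b + 1 + 1 < 2*k+1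
    · rw [Nat.mod_eq_of_lt hc] at h3
      omega
    · have : b + 1 + 1 = 2*k+1 := by omega
      rw [this, Nat.mod_self] at h3
      omega
  rcases h with h | h
  · right; exact key i j hi hj h
  · left; exact key j i hj hi h



def lr (k : ℕ) (r : Fin (2*k+1)) : List (Fin (2*k+1)) := (List.range (2*k)).map (fv k r)

lemma lr_length (r : Fin (2*k+1)) : (lr k r).length = 2*k := by simp [lr]

lemma mem_lr {r v : Fin (2*k+1)} : v ∈ lr k r ↔ ∃ i, i < 2*k ∧ v = fv k r i := by
  simp only [lr, List.mem_map, List.mem_range]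
  constructor
  · rintro ⟨i, hi, rfl⟩; exact ⟨i, hi, rfl⟩
  · rintro ⟨i, hi, rfl⟩; exact ⟨i, hi, rfl⟩

lemma lr_nodup (r : Fin (2*k+1)) : (lr k r).Nodup := by
  apply List.Nodup.map_on _ List.nodup_range
  intro i hi j hj h
  exact fv_inj (List.mem_range.mp hi) (List.mem_range.mp hj) h

lemma lr_chain (r : Fin (2*k+1)) (hk : 1 ≤ k) :
    (lr k r).Chain' (SimpleGraph.cycleGraph (2*k+1)).Adj := by
  rw [lr, List.Chain', List.isChain_map]
  rw [List.isChain_iff_getElem]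
  intro i h
  simp only [List.length_range] at h
  simp only [List.getElem_range]
  exact adj_fv_succ hk (by omega)

lemma lr_eq_cons (r : Fin (2*k+1)) (hk : 1 ≤ k) :
    lr k r = fv k r 0 :: (List.range (2*k-1)).map (fun i => fv k r (1+i)) := by
  have e : List.range (2*k) = List.range 1 ++ (List.range (2*k-1)).map (1+·) := by
    rw [← List.range_add]
    congr 1
    omega
  rw [lr, e]
  simp [List.range_succ]

lemma lr_reverse_eq_cons (r : Fin (2*k+1)) (hk : 1 ≤ k) :
    (lr k r).reverse = fv k r (2*k-1) :: ((List.range (2*k-1)).map (fv k r)).reverse := by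
  have e : List.range (2*k) = List.range (2*k-1) ++ [2*k-1] := by
    rw [← List.range_succ]
    congr 1
    omega
  rw [lr, e]
  simp

lemma lr_decomp (r : Fin (2*k+1)) {j : ℕ} (hj : j + 1 < 2*k) :
    ∃ p q, lr k r = p ++ fv k r j :: fv k r (j+1) :: q := by
  refine ⟨(List.range j).map (fv k r), ((List.range (2*k-j-2)).map (fun i => j+2+i)).map (fv k r), ?_⟩
  have e : List.range (2*k) = List.range j ++ ([j, j+1] ++ (List.range (2*k-j-2)).map (fun i => j+2+i)) := by
    have e1 : List.range (2*k) = List.range (j+2) ++ (List.range (2*k-j-2)).map ((j+2)+·) := by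
      rw [← List.range_add]
      congr 1
      omega
    have e2 : List.range (j+2) = List.range j ++ [j, j+1] := by
      rw [List.range_succ, List.range_succ]
      simp
    rw [e1, e2]
    simp only [List.append_assoc]
  rw [lr, e]
  simp


lemma sum_decomp (r : Fin (2*k+1)) (D : Fin (2*k+1) → ℕ) :
    (∑ v, D v) = D r + ∑ i ∈ Finset.range (2*k), D (fv k r i) := by
  have hinj : Set.InjOn (fv k r) (Finset.range (2*k)) := by
    intro i hi j hj h
    simp only [Finset.coe_range, Set.mem_Iio] at hi hj
    exact fv_inj hi hj h
  have hnotmem : r ∉ (Finset.range (2*k)).image (fv k r) := by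
    simp only [Finset.mem_image, Finset.mem_range]
    rintro ⟨i, hi, h⟩
    exact fv_ne_root hi h
  have huniv : Finset.univ = insert r ((Finset.range (2*k)).image (fv k r)) := by
    apply Finset.eq_univ_iff_forall.mpr ?_ |>.symm
    intro v
    by_cases h : v = r
    · simp [h]
    · obtain ⟨i, hi, rfl⟩ := fv_surj h
      simp only [Finset.mem_insert, Finset.mem_image, Finset.mem_range]
      exact Or.inr ⟨i, hi, rfl⟩
  rw [huniv, Finset.sum_insert hnotmem, Finset.sum_image hinj]

lemma bridgeA (D : V → ℕ) (f : ℕ → V) (n : ℕ) :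
    wsumA D ((List.range n).map f) = ∑ i ∈ Finset.range n, D (f i) * 2 ^ (n-1-i) := by
  induction n with
  | zero => simp
  | succ n ih =>
    rw [List.range_succ, List.map_append, List.map_singleton, wsumA_append_singleton, ih,
      Finset.sum_range_succ]
    have e : ∀ i ∈ Finset.range n, D (f i) * 2 ^ (n+1-1-i) = 2 * (D (f i) * 2 ^ (n-1-i)) := by
      intro i hi
      rw [Finset.mem_range] at hi
      rw [show n+1-1-i = (n-1-i)+1 from by omega, pow_succ]
      ring
    rw [Finset.sum_congr rfl e, show n+1-1-n = 0 from by omega, pow_zero, mul_one,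
      ← Finset.mul_sum]

lemma bridgeB (D : V → ℕ) (f : ℕ → V) (n : ℕ) :
    wsumA D ((List.range n).map f).reverse = ∑ i ∈ Finset.range n, D (f i) * 2 ^ i := by
  induction n with
  | zero => simp
  | succ n ih =>
    rw [List.range_succ, List.map_append, List.map_singleton, List.reverse_append,
      List.reverse_singleton, List.singleton_append, wsumA_cons, List.length_reverse,
      List.length_map, List.length_range, ih, Finset.sum_range_succ]
    ring



lemma upper (hk : 1 ≤ k) (D : Fin (2*k+1) → ℕ) (r : Fin (2*k+1))
    (hD : (∑ v, D v) = 2 * (2^(k+1)/3) + 1) :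
    PebSolvable (SimpleGraph.cycleGraph (2*k+1)) D r := by
  by_cases hr : 1 ≤ D r
  · exact ⟨D, .refl, hr⟩
  have hr0 : D r = 0 := by omega
  rw [sum_decomp r D, hr0, zero_add] at hD
  have hkey : 2 ≤ gval D (lr k r) ∨ 2 ≤ gval D ((lr k r).reverse) := by
    by_contra hc
    push_neg at hc
    obtain ⟨h1, h2⟩ := hc
    have w1 := wsumA_le_gval D (lr k r)
    have w2 := wsumA_le_gval D ((lr k r).reverse)
    rw [lr_length] at w1
    rw [List.length_reverse, lr_length] at w2
    have E1 : 1 ≤ (2:ℕ)^(2*k) := Nat.one_le_two_pow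
    have b1 : wsumA D (lr k r) ≤ 2^(2*k) - 1 := by
      have hg : gval D (lr k r) + 1 ≤ 2 := by omega
      have h2 := Nat.mul_le_mul_left ((2:ℕ)^(2*k)) hg
      generalize hY : (2:ℕ)^(2*k) = Y at h2 w1 E1 ⊢
      omega
    have b2 : wsumA D ((lr k r).reverse) ≤ 2^(2*k) - 1 := by
      have hg : gval D ((lr k r).reverse) + 1 ≤ 2 := by omega
      have h2 := Nat.mul_le_mul_left ((2:ℕ)^(2*k)) hg
      generalize hY : (2:ℕ)^(2*k) = Y at h2 w2 E1 ⊢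
      omega
    rw [lr, bridgeA D (fv k r) (2*k)] at b1
    rw [lr, bridgeB D (fv k r) (2*k)] at b2
    have harith : ∑ i ∈ Finset.range (2*k), D (fv k r i) ≤ 2 * (2^(k+1)/3) :=
      arith k hk (fun i => D (fv k r i)) b1 b2
    omega
  have hsolve : ∀ (l : List (Fin (2*k+1))) (v : Fin (2*k+1)),
      (v :: l).Chain' (SimpleGraph.cycleGraph (2*k+1)).Adj → (v :: l).Nodup →
      (SimpleGraph.cycleGraph (2*k+1)).Adj v r → 2 ≤ gval D (v :: l) →
      PebSolvable (SimpleGraph.cycleGraph (2*k+1)) D r := by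
    intro l v hch hnd hadj hg
    obtain ⟨E, hE, hgE, -⟩ := achieve (G := SimpleGraph.cycleGraph (2*k+1)) l v hch hnd D
    have h2E : 2 ≤ E v := le_trans hg hgE
    refine ⟨Function.update (Function.update E v (E v - 2)) r (E r + 1),
      hE.trans (Relation.ReflTransGen.single ⟨v, r, hadj, h2E, rfl⟩), ?_⟩
    rw [Function.update_self]
    omega
  rcases hkey with h | h
  · rw [lr_eq_cons r hk] at h
    exact hsolve _ _ (by rw [← lr_eq_cons r hk]; exact lr_chain r hk)
      (by rw [← lr_eq_cons r hk]; exact lr_nodup r) ((adj_root_fv0 hk).symm) h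
  · rw [lr_reverse_eq_cons r hk] at h
    refine hsolve _ _ ?_ ?_ (adj_root_fvlast hk) h
    · rw [← lr_reverse_eq_cons r hk, List.Chain', List.isChain_reverse]
      exact List.IsChain.imp (fun a b hab => hab.symm) (lr_chain r hk)
    · rw [← lr_reverse_eq_cons r hk]
      exact List.nodup_reverse.mpr (lr_nodup r)

lemma lr_decomp' (r : Fin (2*k+1)) {j : ℕ} (hj : j + 1 < 2*k) :
    lr k r = (List.range j).map (fv k r) ++ fv k r j :: fv k r (j+1) ::
      ((List.range (2*k-j-2)).map (fun i => j+2+i)).map (fv k r) := by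
  have e : List.range (2*k) = List.range j ++ ([j, j+1] ++ (List.range (2*k-j-2)).map (fun i => j+2+i)) := by
    have e1 : List.range (2*k) = List.range (j+2) ++ (List.range (2*k-j-2)).map ((j+2)+·) := by
      rw [← List.range_add]
      congr 1
      omega
    have e2 : List.range (j+2) = List.range j ++ [j, j+1] := by
      rw [List.range_succ, List.range_succ]
      simp
    rw [e1, e2]
    simp only [List.append_assoc]
  rw [lr, e]
  simp

lemma inv_step (hk : 1 ≤ k) {D D' : Fin (2*k+1) → ℕ} {r : Fin (2*k+1)}
    (hstep : PebStep (SimpleGraph.cycleGraph (2*k+1)) D D')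
    (h0 : D r = 0) (h1 : gval D (lr k r) ≤ 1) (h2 : gval D ((lr k r).reverse) ≤ 1) :
    D' r = 0 ∧ gval D' (lr k r) ≤ 1 ∧ gval D' ((lr k r).reverse) ≤ 1 := by
  obtain ⟨u, v, hadj, h2u, rfl⟩ := hstep
  have hur : u ≠ r := by intro h; rw [h, h0] at h2u; omega
  by_cases hvr : v = r
  · exfalso
    rcases adj_root_cases hk (hvr ▸ hadj) with h | h
    · subst h
      rw [lr_eq_cons r hk] at h1
      have := le_gval_head D (fv k r 0) ((List.range (2*k-1)).map (fun i => fv k r (1+i)))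
      omega
    · subst h
      rw [lr_reverse_eq_cons r hk] at h2
      have := le_gval_head D (fv k r (2*k-1)) (((List.range (2*k-1)).map (fv k r)).reverse)
      omega
  · obtain ⟨i, hi, hu⟩ := fv_surj hur
    obtain ⟨j, hj, hv⟩ := fv_surj hvr
    subst hu; subst hv
    have hr0 : Function.update (Function.update D (fv k r i) (D (fv k r i) - 2)) (fv k r j)
        (D (fv k r j) + 1) r = 0 := by
      rw [Function.update_of_ne (Ne.symm (fv_ne_root hj)),
        Function.update_of_ne (Ne.symm (fv_ne_root hi)), h0]
    rcases adj_fv_fv hk hi hj hadj with h | h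
    · subst h
      obtain ⟨p, q, hpq⟩ := lr_decomp r hj
      have hrev : (lr k r).reverse = q.reverse ++ fv k r (i+1) :: fv k r i :: p.reverse := by
        rw [hpq]; simp
      refine ⟨hr0, ?_, ?_⟩
      · rw [hpq] at h1 ⊢
        exact le_trans (gval_step p q (by rw [← hpq]; exact lr_nodup r)
          (Or.inl ⟨rfl, rfl⟩) h2u) h1
      · rw [hrev] at h2 ⊢
        exact le_trans (gval_step q.reverse p.reverse
          (by rw [← hrev]; exact List.nodup_reverse.mpr (lr_nodup r))
          (Or.inr ⟨rfl, rfl⟩) h2u) h2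
    · subst h
      obtain ⟨p, q, hpq⟩ := lr_decomp r hi
      have hrev : (lr k r).reverse = q.reverse ++ fv k r (j+1) :: fv k r j :: p.reverse := by
        rw [hpq]; simp
      refine ⟨hr0, ?_, ?_⟩
      · rw [hpq] at h1 ⊢
        exact le_trans (gval_step p q (by rw [← hpq]; exact lr_nodup r)
          (Or.inr ⟨rfl, rfl⟩) h2u) h1
      · rw [hrev] at h2 ⊢
        exact le_trans (gval_step q.reverse p.reverse
          (by rw [← hrev]; exact List.nodup_reverse.mpr (lr_nodup r))
          (Or.inl ⟨rfl, rfl⟩) h2u) h2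

lemma lower (hk : 1 ≤ k) (t : ℕ) (ht : t ≤ 2 * (2^(k+1)/3)) :
    ∃ D : Fin (2*k+1) → ℕ, (∑ v, D v) = t ∧
      ¬ PebSolvable (SimpleGraph.cycleGraph (2*k+1)) D (0 : Fin (2*k+1)) := by
  have h3 : ¬ (3 ∣ 2^(k+1)) := by
    intro h
    have := Nat.Prime.dvd_of_dvd_pow (p := 3) (by norm_num) h
    omega
  have hdm := Nat.div_add_mod (2^(k+1)) 3
  have hrne : 2^(k+1) % 3 ≠ 0 := fun h => h3 (Nat.dvd_of_mod_eq_zero h)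
  set α := min t (2^(k+1)/3) with hα
  set β := t - α with hβ
  have hαm : α ≤ 2^(k+1)/3 := min_le_right _ _
  have hβm : β ≤ 2^(k+1)/3 := by omega
  have hαβ : α + β = t := by omega
  have hkk : k - 1 < 2*k := by omega
  have hklt : k < 2*k := by omega
  have hyx : fv k (0 : Fin (2*k+1)) k ≠ fv k (0 : Fin (2*k+1)) (k-1) := by
    intro hc
    have := fv_inj hklt hkk hc
    omega
  refine ⟨fun v => if v = fv k (0 : Fin (2*k+1)) (k-1) then α
    else if v = fv k (0 : Fin (2*k+1)) k then β else 0, ?_, ?_⟩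
  all_goals
    set D : Fin (2*k+1) → ℕ := fun v => if v = fv k (0 : Fin (2*k+1)) (k-1) then α
      else if v = fv k (0 : Fin (2*k+1)) k then β else 0 with hD
  case _ =>
    -- total is t
    have hD0 : D 0 = 0 := by
      have hne1 : (0 : Fin (2*k+1)) ≠ fv k (0 : Fin (2*k+1)) (k-1) := Ne.symm (fv_ne_root hkk)
      have hne2 : (0 : Fin (2*k+1)) ≠ fv k (0 : Fin (2*k+1)) k := Ne.symm (fv_ne_root hklt)
      simp [hD, hne1, hne2]
    rw [sum_decomp (0 : Fin (2*k+1)) D, hD0, zero_add]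
    have hcong : ∀ i ∈ Finset.range (2*k), D (fv k (0 : Fin (2*k+1)) i)
        = (if i = k-1 then α else 0) + (if i = k then β else 0) := by
      intro i hi
      rw [Finset.mem_range] at hi
      by_cases e1 : i = k-1
      · subst e1
        simp [hD, show k-1 ≠ k from by omega]
      have hne1 : fv k (0 : Fin (2*k+1)) i ≠ fv k (0 : Fin (2*k+1)) (k-1) :=
        fun hc => e1 (fv_inj hi hkk hc)
      by_cases e2 : i = k
      · rw [if_neg e1, if_pos e2, zero_add]
        simp only [hD]
        rw [if_neg hne1, if_pos (by rw [e2])]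
      · have hne2 : fv k (0 : Fin (2*k+1)) i ≠ fv k (0 : Fin (2*k+1)) k :=
          fun hc => e2 (fv_inj hi hklt hc)
        simp [hD, hne1, hne2, e1, e2]
    rw [Finset.sum_congr rfl hcong, Finset.sum_add_distrib,
      Finset.sum_ite_eq' (Finset.range (2*k)) (k-1) (fun _ => α),
      Finset.sum_ite_eq' (Finset.range (2*k)) k (fun _ => β)]
    simp only [Finset.mem_range]
    rw [if_pos hkk, if_pos hklt]
    omega
  case _ =>
    -- unsolvable
    have hDx : D (fv k (0 : Fin (2*k+1)) (k-1)) = α := by simp [hD]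
    have hDy : D (fv k (0 : Fin (2*k+1)) k) = β := by simp [hD, hyx]
    have hD0 : D 0 = 0 := by
      have hne1 : (0 : Fin (2*k+1)) ≠ fv k (0 : Fin (2*k+1)) (k-1) := Ne.symm (fv_ne_root hkk)
      have hne2 : (0 : Fin (2*k+1)) ≠ fv k (0 : Fin (2*k+1)) k := Ne.symm (fv_ne_root hklt)
      simp [hD, hne1, hne2]
    have hzero : ∀ i, i < 2*k → i ≠ k-1 → i ≠ k → D (fv k (0 : Fin (2*k+1)) i) = 0 := by
      intro i hi e1 e2
      have hne1 : fv k (0 : Fin (2*k+1)) i ≠ fv k (0 : Fin (2*k+1)) (k-1) :=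
        fun hc => e1 (fv_inj hi hkk hc)
      have hne2 : fv k (0 : Fin (2*k+1)) i ≠ fv k (0 : Fin (2*k+1)) k :=
        fun hc => e2 (fv_inj hi hklt hc)
      simp [hD, hne1, hne2]
    have hdec := lr_decomp' (0 : Fin (2*k+1)) (show (k-1) + 1 < 2*k from by omega)
    rw [show (k-1)+1 = k from by omega] at hdec
    have hPzero : ∀ v ∈ (List.range (k-1)).map (fv k (0 : Fin (2*k+1))), D v = 0 := by
      intro v hv
      rw [List.mem_map] at hv
      obtain ⟨i, hi, rfl⟩ := hv
      rw [List.mem_range] at hi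
      exact hzero i (by omega) (by omega) (by omega)
    have hQzero : ∀ v ∈ ((List.range (2*k-(k-1)-2)).map (fun i => (k-1)+2+i)).map
        (fv k (0 : Fin (2*k+1))), D v = 0 := by
      intro v hv
      rw [List.mem_map] at hv
      obtain ⟨i, hi, rfl⟩ := hv
      rw [List.mem_map] at hi
      obtain ⟨i', hi', rfl⟩ := hi
      rw [List.mem_range] at hi'
      exact hzero _ (by omega) (by omega) (by omega)
    have hPlen : ((List.range (k-1)).map (fv k (0 : Fin (2*k+1)))).length = k-1 := by simp
    have hQlen : (((List.range (2*k-(k-1)-2)).map (fun i => (k-1)+2+i)).map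
        (fv k (0 : Fin (2*k+1)))).length = k-1 := by
      simp
      omega
    -- bound numerics
    have hP2 : (0:ℕ) < 2^(k-1) := pow_pos (by norm_num) _
    have e4 : (2:ℕ)^(k+1) = 4*2^(k-1) := by
      rw [show k+1 = (k-1)+2 from by omega, pow_add]; ring
    rw [e4] at hdm hrne hαm hβm
    have hlt1 : α + β/2 < 2 * 2^(k-1) := by omega
    have hlt2 : β + α/2 < 2 * 2^(k-1) := by omega
    have g1le : gval D (lr k (0 : Fin (2*k+1))) ≤ 1 := by
      rw [hdec, gval_zero_prefix _ hPzero, hPlen, gval_cons, gval_cons,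
        gval_zero hQzero, hDx, hDy]
      have := (Nat.div_lt_iff_lt_mul hP2).mpr hlt1
      simp only [Nat.zero_div, Nat.add_zero]
      omega
    have hdecr : (lr k (0 : Fin (2*k+1))).reverse
        = (((List.range (2*k-(k-1)-2)).map (fun i => (k-1)+2+i)).map
            (fv k (0 : Fin (2*k+1)))).reverse ++ fv k (0 : Fin (2*k+1)) k ::
            fv k (0 : Fin (2*k+1)) (k-1) ::
            ((List.range (k-1)).map (fv k (0 : Fin (2*k+1)))).reverse := by
      rw [hdec]; simp
    have g2le : gval D ((lr k (0 : Fin (2*k+1))).reverse) ≤ 1 := by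
      rw [hdecr, gval_zero_prefix _ (fun v hv => hQzero v (List.mem_reverse.mp hv)),
        List.length_reverse, hQlen, gval_cons, gval_cons,
        gval_zero (fun v hv => hPzero v (List.mem_reverse.mp hv)), hDx, hDy]
      have := (Nat.div_lt_iff_lt_mul hP2).mpr hlt2
      simp only [Nat.zero_div, Nat.add_zero]
      omega
    rintro ⟨D', hsteps, hfin⟩
    have hinv : ∀ E, Relation.ReflTransGen (PebStep (SimpleGraph.cycleGraph (2*k+1))) D E →
        (E 0 = 0 ∧ gval E (lr k (0 : Fin (2*k+1))) ≤ 1 ∧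
          gval E ((lr k (0 : Fin (2*k+1))).reverse) ≤ 1) := by
      intro E h
      induction h with
      | refl => exact ⟨hD0, g1le, g2le⟩
      | tail _ hstep ih => exact inv_step hk hstep ih.1 ih.2.1 ih.2.2
    have := (hinv D' hsteps).1
    omega

end PebAux

theorem pebbling_number_odd_cycle (k : ℕ) (hk : 1 ≤ k) :
    pebblingNumber (Fin (2 * k + 1)) (SimpleGraph.cycleGraph (2 * k + 1)) =
      2 * (2 ^ (k + 1) / 3) + 1 := by
  have hmem : (2 * (2 ^ (k + 1) / 3) + 1) ∈ {t : ℕ | ∀ D : Fin (2*k+1) → ℕ,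
      ∀ r : Fin (2*k+1), (∑ v, D v) = t → PebSolvable (SimpleGraph.cycleGraph (2*k+1)) D r} :=
    fun D r h => PebAux.upper hk D r h
  apply le_antisymm
  · exact Nat.sInf_le hmem
  · apply le_csInf ⟨_, hmem⟩
    intro t htmem
    by_contra hcon
    push_neg at hcon
    obtain ⟨D, hsum, hnot⟩ := PebAux.lower hk t (by omega)
    exact hnot (htmem D 0 hsum)
end

section
/- If a connected graph G is 3-connected and has diameter 2, then f(G) = n(G). -/
set_option linter.unusedVariables false
set_option linter.unusedSectionVars false

namespace PebAux

variable {V : Type*} [DecidableEq V] {G : SimpleGraph V}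

def after (D : V → ℕ) (u v : V) : V → ℕ :=
  Function.update (Function.update D u (D u - 2)) v (D v + 1)

def ReachS (G : SimpleGraph V) (D : V → ℕ) : V → V → Prop :=
  Relation.ReflTransGen (fun a b => G.Adj a b ∧ 1 ≤ D a ∧ 1 ≤ D b)

lemma solv_base {D : V → ℕ} {r : V} (h : 1 ≤ D r) : PebSolvable G D r :=
  ⟨D, Relation.ReflTransGen.refl, h⟩

lemma solv_rtg {D D' : V → ℕ} {r : V} (h : Relation.ReflTransGen (PebStep G) D D')
    (h' : PebSolvable G D' r) : PebSolvable G D r := by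
  obtain ⟨D'', h1, h2⟩ := h'
  exact ⟨D'', h.trans h1, h2⟩

lemma step_mk {D : V → ℕ} {u v : V} (huv : G.Adj u v) (h2 : 2 ≤ D u) :
    PebStep G D (Function.update (Function.update D u (D u - 2)) v (D v + 1)) :=
  ⟨u, v, huv, h2, rfl⟩

lemma after_tgt (D : V → ℕ) {u v : V} (huv : u ≠ v) : after D u v v = D v + 1 := by
  simp [after]

lemma after_src (D : V → ℕ) {u v : V} (huv : u ≠ v) : after D u v u = D u - 2 := by
  simp [after, Function.update_of_ne huv]

lemma after_other (D : V → ℕ) {u v w : V} (h1 : w ≠ u) (h2 : w ≠ v) : after D u v w = D w := by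
  simp [after, Function.update_of_ne h1, Function.update_of_ne h2]

lemma step_after {D : V → ℕ} {u v : V} (huv : G.Adj u v) (h2 : 2 ≤ D u) :
    PebStep G D (after D u v) := step_mk huv h2

/-- two pebbles on a neighbor of the root solves. -/
lemma solv_two {D : V → ℕ} {w r : V} (hwr : G.Adj w r) (h2 : 2 ≤ D w) :
    PebSolvable G D r := by
  refine solv_rtg (Relation.ReflTransGen.single (step_after hwr h2)) (solv_base ?_)
  rw [after_tgt _ hwr.ne]
  omega

/-- four pebbles at distance two solves. -/
lemma solv_four {D : V → ℕ} {u w r : V} (huw : G.Adj u w) (hwr : G.Adj w r)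
    (hur : u ≠ r) (h4 : 4 ≤ D u) : PebSolvable G D r := by
  refine solv_rtg (Relation.ReflTransGen.single (step_after huw (by omega))) ?_
  have h1 : after D u w u = D u - 2 := after_src _ huw.ne
  refine solv_rtg (Relation.ReflTransGen.single (step_after huw (by omega))) ?_
  apply solv_two hwr
  rw [after_tgt _ huw.ne, after_tgt _ huw.ne]
  omega


lemma reach_refl {D : V → ℕ} (x : V) : ReachS G D x x := Relation.ReflTransGen.refl

lemma reach_trans {D : V → ℕ} {x y z : V} (h1 : ReachS G D x y) (h2 : ReachS G D y z) :
    ReachS G D x z := h1.trans h2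

lemma reach_symm {D : V → ℕ} {x y : V} (h : ReachS G D x y) : ReachS G D y x :=
  by
    haveI : Std.Symm (fun a b => G.Adj a b ∧ 1 ≤ D a ∧ 1 ≤ D b) :=
      ⟨fun a b hab => ⟨hab.1.symm, hab.2.2, hab.2.1⟩⟩
    exact Std.Symm.symm (self := Relation.ReflTransGen.symmetric) _ _ h

lemma reach_single {D : V → ℕ} {x y : V} (h : G.Adj x y) (h1 : 1 ≤ D x) (h2 : 1 ≤ D y) :
    ReachS G D x y := Relation.ReflTransGen.single ⟨h, h1, h2⟩

lemma reach_pos {D : V → ℕ} {x y : V} (h : ReachS G D x y) (hxy : x ≠ y) : 1 ≤ D y := by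
  induction h with
  | refl => exact absurd rfl hxy
  | tail _ hbc _ => exact hbc.2.2

lemma reach_to_walk {D : V → ℕ} {x y : V} (hx : 1 ≤ D x) (h : ReachS G D x y) :
    ∃ w : G.Walk x y, ∀ v ∈ w.support, 1 ≤ D v := by
  induction h with
  | refl => exact ⟨SimpleGraph.Walk.nil, by simpa⟩
  | @tail b c _ hbc ih =>
    obtain ⟨w, hw⟩ := ih
    refine ⟨w.concat hbc.1, ?_⟩
    intro v hv
    rw [SimpleGraph.Walk.support_concat] at hv
    rw [List.mem_append, List.mem_singleton] at hv
    rcases hv with hv | hv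
    · exact hw v hv
    · rw [hv]; exact hbc.2.2

lemma walk_support_reach {D : V → ℕ} {x y : V} (w : G.Walk x y)
    (h : ∀ v ∈ w.support, 1 ≤ D v) : ∀ v ∈ w.support, ReachS G D x v := by
  induction w with
  | nil =>
    intro v hv
    simp only [SimpleGraph.Walk.support_nil, List.mem_singleton] at hv
    rw [hv]; exact reach_refl _
  | @cons x z y hadj q ih =>
    intro v hv
    have hx1 : 1 ≤ D x := h x (by simp)
    have hz1 : 1 ≤ D z := h z (by simp)
    have hxz : ReachS G D x z := reach_single hadj hx1 hz1
    simp only [SimpleGraph.Walk.support_cons, List.mem_cons] at hv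
    rcases hv with hv | hv
    · rw [hv]; exact reach_refl _
    · exact hxz.trans (ih (fun u hu => h u (by simp [hu])) v hv)

/-- Core chain lemma: along a path with ≥2 pebbles at the start and ≥1 pebble on each
interior vertex, we can deliver one extra pebble to the endpoint. -/
lemma chain_core {x y : V} (p : G.Walk x y) (hp : p.IsPath) (hxy : x ≠ y) :
    ∀ D : V → ℕ, 2 ≤ D x → (∀ v ∈ p.support, v ≠ x → v ≠ y → 1 ≤ D v) →
    ∃ D', Relation.ReflTransGen (PebStep G) D D' ∧ D' y = D y + 1 ∧
      ∀ v, v ∉ p.support → D' v = D v := by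
  induction p with
  | nil => exact absurd rfl hxy
  | @cons x z y hadj q ih =>
    intro D hx hint
    rw [SimpleGraph.Walk.cons_isPath_iff] at hp
    have hxz : x ≠ z := hadj.ne
    have step1 : PebStep G D (after D x z) := step_after hadj hx
    by_cases hzy : z = y
    · subst hzy
      have hq : q = SimpleGraph.Walk.nil := (SimpleGraph.Walk.isPath_iff_eq_nil (p := q)).mp hp.1
      refine ⟨after D x z, Relation.ReflTransGen.single step1, after_tgt _ hxz, ?_⟩
      intro v hv
      subst hq
      simp only [SimpleGraph.Walk.support_cons, SimpleGraph.Walk.support_nil,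
        List.mem_cons, List.mem_singleton] at hv
      push_neg at hv
      exact after_other _ hv.1 hv.2.1
    · have hznx : z ≠ x := fun h => hxz h.symm
      have hz1 : 1 ≤ D z := hint z (by simp) hznx hzy
      have hz2 : 2 ≤ after D x z z := by rw [after_tgt _ hxz]; omega
      have hintq : ∀ v ∈ q.support, v ≠ z → v ≠ y → 1 ≤ after D x z v := by
        intro v hv hvz hvy
        have hvx : v ≠ x := fun h => hp.2 (h ▸ hv)
        rw [after_other _ hvx hvz]
        exact hint v (by simp [hv]) hvx hvy
      obtain ⟨D', hrtg, hy, hoff⟩ := ih hp.1 hzy (after D x z) hz2 hintq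
      refine ⟨D', (Relation.ReflTransGen.single step1).trans hrtg, ?_, ?_⟩
      · have hyq : y ∈ q.support := SimpleGraph.Walk.end_mem_support q
        have : after D x z y = D y := after_other _ (fun h => hxy h.symm) (fun h => hzy h.symm)
        rw [hy, this]
      · intro v hv
        simp only [SimpleGraph.Walk.support_cons, List.mem_cons] at hv
        push_neg at hv
        rw [hoff v hv.2, after_other _ hv.1 (fun h => hv.2 (h ▸ q.start_mem_support))]

/-- Deliver one extra pebble to a vertex `y` in the same positive component as `x`. -/
lemma deliver1 {D D₁ : V → ℕ} {x y : V} (hreach : ReachS G D x y) (hxy : x ≠ y)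
    (hx2 : 2 ≤ D x) (hagree : ∀ v, ReachS G D x v → D₁ v = D v) :
    ∃ D', Relation.ReflTransGen (PebStep G) D₁ D' ∧ D' y = D₁ y + 1 ∧
      ∀ v, v ≠ y → ¬ ReachS G D x v → D' v = D₁ v := by
  obtain ⟨w, hw⟩ := reach_to_walk (by omega) hreach
  set p : G.Walk x y := w.toPath.val with hpdef
  have hsub : p.support ⊆ w.support := SimpleGraph.Walk.support_toPath_subset w
  have hreachsup : ∀ v ∈ p.support, ReachS G D x v :=
    fun v hv => walk_support_reach w hw v (hsub hv)
  obtain ⟨D', h1, h2, h3⟩ := chain_core p w.toPath.2 hxy D₁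
    (by rw [hagree x (reach_refl x)]; exact hx2)
    (by intro v hv _ _
        rw [hagree v (hreachsup v hv)]
        exact hw v (hsub hv))
  exact ⟨D', h1, h2, fun v hvy hvr => h3 v (fun hc => hvr (hreachsup v hc))⟩

/-- Deliver one extra pebble from the component of `x` to a zero vertex `z`
adjacent to an element `y'` of the component. -/
lemma deliver2 {D D₁ : V → ℕ} {x y' z : V} (hreach : ReachS G D x y') (hadj : G.Adj y' z)
    (hz0 : D z = 0) (hx2 : 2 ≤ D x) (hagree : ∀ v, ReachS G D x v → D₁ v = D v) :
    ∃ D', Relation.ReflTransGen (PebStep G) D₁ D' ∧ D' z = D₁ z + 1 ∧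
      ∀ v, v ≠ z → ¬ ReachS G D x v → D' v = D₁ v := by
  obtain ⟨w, hw⟩ := reach_to_walk (by omega) hreach
  set p : G.Walk x y' := w.toPath.val with hpdef
  have hsub : p.support ⊆ w.support := SimpleGraph.Walk.support_toPath_subset w
  have hreachsup : ∀ v ∈ p.support, ReachS G D x v :=
    fun v hv => walk_support_reach w hw v (hsub hv)
  have hzns : z ∉ p.support := fun hc => by
    have := hw z (hsub hc); omega
  have hq : ((SimpleGraph.Walk.cons hadj.symm p.reverse).reverse : G.Walk x z).IsPath := by
    apply SimpleGraph.Walk.IsPath.reverse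
    rw [SimpleGraph.Walk.cons_isPath_iff]
    refine ⟨w.toPath.2.reverse, ?_⟩
    rw [SimpleGraph.Walk.support_reverse, List.mem_reverse]
    exact hzns
  set q : G.Walk x z := (SimpleGraph.Walk.cons hadj.symm p.reverse).reverse with hqdef
  have hqsup : ∀ v, v ∈ q.support ↔ (v = z ∨ v ∈ p.support) := by
    intro v
    rw [hqdef, SimpleGraph.Walk.support_reverse, List.mem_reverse,
      SimpleGraph.Walk.support_cons, List.mem_cons, SimpleGraph.Walk.support_reverse,
      List.mem_reverse]
  have hxz : x ≠ z := fun hc => by rw [hc] at hx2; omega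
  obtain ⟨D', h1, h2, h3⟩ := chain_core q hq hxz D₁
    (by rw [hagree x (reach_refl x)]; exact hx2)
    (by intro v hv _ hvz
        rcases (hqsup v).mp hv with h | h
        · exact absurd h hvz
        · rw [hagree v (hreachsup v h)]; exact hw v (hsub h))
  refine ⟨D', h1, h2, fun v hvz hvr => h3 v ?_⟩
  intro hc
  rcases (hqsup v).mp hc with h | h
  · exact hvz h
  · exact hvr (hreachsup v h)

/-- Launch from a (currently) doubly-pebbled zero vertex `z` adjacent to the
(original) component of `y`, delivering one extra pebble to `y`. -/
lemma deliver3 {D D₁ : V → ℕ} {y x' z : V} (hreach : ReachS G D y x') (hy1 : 1 ≤ D y)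
    (hadj : G.Adj x' z) (hz0 : D z = 0) (hz2 : 2 ≤ D₁ z)
    (hagree : ∀ v, ReachS G D y v → D₁ v = D v) :
    ∃ D', Relation.ReflTransGen (PebStep G) D₁ D' ∧ D' y = D₁ y + 1 ∧
      ∀ v, v ≠ z → ¬ ReachS G D y v → D' v = D₁ v := by
  obtain ⟨w, hw⟩ := reach_to_walk hy1 hreach
  set p : G.Walk y x' := w.toPath.val with hpdef
  have hsub : p.support ⊆ w.support := SimpleGraph.Walk.support_toPath_subset w
  have hreachsup : ∀ v ∈ p.support, ReachS G D y v :=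
    fun v hv => walk_support_reach w hw v (hsub hv)
  have hzns : z ∉ p.reverse.support := by
    rw [SimpleGraph.Walk.support_reverse, List.mem_reverse]
    exact fun hc => by have := hw z (hsub hc); omega
  have hzy : z ≠ y := fun hc => by
    apply hzns
    rw [SimpleGraph.Walk.support_reverse, List.mem_reverse, hc]
    exact p.start_mem_support
  set q : G.Walk z y := SimpleGraph.Walk.cons hadj.symm p.reverse with hqdef
  have hq : q.IsPath := by
    rw [hqdef, SimpleGraph.Walk.cons_isPath_iff]
    exact ⟨w.toPath.2.reverse, hzns⟩
  have hqsup : ∀ v, v ∈ q.support ↔ (v = z ∨ v ∈ p.support) := by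
    intro v
    rw [hqdef, SimpleGraph.Walk.support_cons, List.mem_cons,
      SimpleGraph.Walk.support_reverse, List.mem_reverse]
  obtain ⟨D', h1, h2, h3⟩ := chain_core q hq hzy D₁ hz2
    (by intro v hv hvz _
        rcases (hqsup v).mp hv with h | h
        · exact absurd h hvz
        · rw [hagree v (hreachsup v h)]; exact hw v (hsub h))
  refine ⟨D', h1, h2, fun v hvz hvr => h3 v ?_⟩
  intro hc
  rcases (hqsup v).mp hc with h | h
  · exact hvz h
  · exact hvr (hreachsup v h)

variable [Fintype V]

section Main
variable {D : V → ℕ} {r : V}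
  (hG : G.Connected) (hcard : 3 < Fintype.card V)
  (h3conn : ∀ s : Finset V, s.card ≤ 2 → (G.induce {v : V | v ∉ s}).Connected)
  (hd : G.diam = 2)
  (huns : ¬ PebSolvable G D r)

include hG hd in
lemma common {u v : V} (hne : u ≠ v) (hnadj : ¬ G.Adj u v) :
    ∃ w, G.Adj u w ∧ G.Adj w v := by
  have hediam : G.ediam ≠ ⊤ :=
    SimpleGraph.ediam_ne_top_of_diam_ne_zero (by rw [hd]; norm_num)
  have h2 : G.dist u v ≤ 2 := hd ▸ SimpleGraph.dist_le_diam hediam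
  have hpos : 0 < G.dist u v := hG.pos_dist_of_ne hne
  have h1 : G.dist u v ≠ 1 := fun hc => hnadj (SimpleGraph.dist_eq_one_iff_adj.mp hc)
  have hdist : G.dist u v = 2 := by omega
  have hne0 : G.dist u v ≠ 0 := by omega
  obtain ⟨p, hp⟩ := SimpleGraph.exists_walk_of_dist_ne_zero hne0
  have hlen : p.length = 2 := by rw [hp, hdist]
  refine ⟨p.getVert 1, ?_, ?_⟩
  · have := p.adj_getVert_succ (i := 0) (by omega)
    rwa [p.getVert_zero] at this
  · have := p.adj_getVert_succ (i := 1) (by omega)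
    rw [show (1:ℕ)+1 = p.length by omega, p.getVert_length] at this
    exact this

include huns in
lemma fact_r0 : D r = 0 := by
  by_contra h
  exact huns (solv_base (by omega))

include huns in
lemma factA {x w : V} (hx : 2 ≤ D x) (hr : ReachS G D x w) (hadj : G.Adj w r) : False := by
  obtain ⟨D', h1, h2, _⟩ := deliver2 hr hadj (fact_r0 huns) hx (fun _ _ => rfl)
  exact huns (solv_rtg h1 (solv_base (by omega)))

include hG hd huns in
lemma factC {u : V} (hu : 2 ≤ D u) : ∃ c, G.Adj u c ∧ G.Adj c r ∧ D c = 0 := by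
  have hur : u ≠ r := fun h => by rw [h, fact_r0 huns] at hu; omega
  have hnadj : ¬ G.Adj u r := fun h => factA huns hu (reach_refl u) h
  obtain ⟨c, h1, h2⟩ := common hG hd hur hnadj
  refine ⟨c, h1, h2, ?_⟩
  by_contra h
  exact factA huns hu (reach_single h1 (by omega) (by omega)) h2

include hG hd huns in
lemma fact3 (u : V) : D u ≤ 3 := by
  by_contra h
  push_neg at h
  obtain ⟨c, h1, h2, _⟩ := factC hG hd huns (u := u) (by omega)
  exact huns (solv_four h1 h2 (fun hc => by rw [hc, fact_r0 huns] at h; omega) h)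

include huns in
lemma fact5 {u v w : V} (huv : u ≠ v) (hu : 2 ≤ D u) (hv : 2 ≤ D v)
    (h1 : G.Adj u w) (h2 : G.Adj v w) (h3 : G.Adj w r) : False := by
  apply huns
  have hvw : v ≠ w := h2.ne
  have hvu : v ≠ u := huv.symm
  refine solv_rtg (Relation.ReflTransGen.single (step_after h1 hu)) ?_
  have e1 : after D u w v = D v := after_other _ hvu hvw
  refine solv_rtg (Relation.ReflTransGen.single (step_after h2 (by omega))) ?_
  apply solv_two h3
  rw [after_tgt _ hvw, after_tgt _ h1.ne]
  omega

include hG hd huns in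
lemma factB {u v : V} (hu : D u = 3) (hv : 2 ≤ D v) (hvu : v ≠ u)
    (hr : ReachS G D v u) : False := by
  obtain ⟨D', h1, h2, _⟩ := deliver1 hr hvu hv (fun _ _ => rfl)
  obtain ⟨c, hc1, hc2, _⟩ := factC hG hd huns (u := u) (by omega)
  have hur : u ≠ r := fun h => by rw [h, fact_r0 huns] at hu; omega
  exact huns (solv_rtg h1 (solv_four hc1 hc2 hur (by omega)))

include huns in
lemma factP5 {u v w xu xv : V} (hu : 2 ≤ D u) (hv : 2 ≤ D v) (hnr : ¬ ReachS G D u v)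
    (hru : ReachS G D u xu) (hau : G.Adj xu w) (hrv : ReachS G D v xv) (hav : G.Adj xv w)
    (hw0 : D w = 0) (hwr : G.Adj w r) : False := by
  obtain ⟨D1, h1, e1, o1⟩ := deliver2 hru hau hw0 hu (fun _ _ => rfl)
  have hagree : ∀ t, ReachS G D v t → D1 t = D t := by
    intro t ht
    have ht1 : 1 ≤ D t := by
      rcases eq_or_ne v t with h | h
      · rw [← h]; omega
      · exact reach_pos ht h
    exact o1 t (fun hc => by rw [hc, hw0] at ht1; omega)
      (fun hc => hnr (hc.trans (reach_symm ht)))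
  obtain ⟨D2, h2, e2, _⟩ := deliver2 (D := D) (D₁ := D1) hrv hav hw0 hv hagree
  exact huns (solv_rtg (h1.trans h2) (solv_two hwr (by rw [e2, e1]; omega)))

include hG hd huns in
lemma factP12 {u1 u2 u3 d x1 x2 x3 : V} (h1 : 2 ≤ D u1) (h2 : 2 ≤ D u2) (h3 : D u3 = 3)
    (hn12 : ¬ ReachS G D u1 u2) (hn13 : ¬ ReachS G D u1 u3) (hn23 : ¬ ReachS G D u2 u3)
    (hd0 : D d = 0) (hr1 : ReachS G D u1 x1) (ha1 : G.Adj x1 d)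
    (hr2 : ReachS G D u2 x2) (ha2 : G.Adj x2 d)
    (hr3 : ReachS G D u3 x3) (ha3 : G.Adj x3 d) : False := by
  obtain ⟨D1, s1, e1, o1⟩ := deliver2 hr1 ha1 hd0 h1 (fun _ _ => rfl)
  have hag1 : ∀ t, ReachS G D u2 t → D1 t = D t := by
    intro t ht
    have ht1 : 1 ≤ D t := by
      rcases eq_or_ne u2 t with h | h
      · rw [← h]; omega
      · exact reach_pos ht h
    exact o1 t (fun hc => by rw [hc, hd0] at ht1; omega)
      (fun hc => hn12 (hc.trans (reach_symm ht)))
  obtain ⟨D2, s2, e2, o2⟩ := deliver2 (D₁ := D1) hr2 ha2 hd0 h2 hag1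
  have hag2 : ∀ t, ReachS G D u3 t → D2 t = D t := by
    intro t ht
    have ht1 : 1 ≤ D t := by
      rcases eq_or_ne u3 t with h | h
      · rw [← h]; omega
      · exact reach_pos ht h
    have htd : t ≠ d := fun hc => by rw [hc, hd0] at ht1; omega
    rw [o2 t htd (fun hc => hn23 (hc.trans (reach_symm ht)))]
    exact o1 t htd (fun hc => hn13 (hc.trans (reach_symm ht)))
  have hd2 : 2 ≤ D2 d := by
    rw [e2, e1]; omega
  obtain ⟨D3, s3, e3, _⟩ := deliver3 (D₁ := D2) hr3 (by omega) ha3 hd0 hd2 hag2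
  obtain ⟨c, hc1, hc2, _⟩ := factC hG hd huns (u := u3) (by omega)
  have hu3r : u3 ≠ r := fun h => by rw [h, fact_r0 huns] at h3; omega
  have hu3 : D3 u3 = 4 := by
    rw [e3, hag2 u3 (reach_refl u3)]; omega
  exact huns (solv_rtg ((s1.trans s2).trans s3) (solv_four hc1 hc2 hu3r (by omega)))

open Classical in
include h3conn huns in
lemma fact_bd3 {u : V} (hu : 2 ≤ D u) :
    3 ≤ (Finset.univ.filter
      (fun d => D d = 0 ∧ ∃ x, ReachS G D u x ∧ G.Adj x d)).card := by
  set Bd : Finset V := Finset.univ.filter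
      (fun d => D d = 0 ∧ ∃ x, ReachS G D u x ∧ G.Adj x d) with hBd
  by_contra hcard2
  push_neg at hcard2
  have hconn' := h3conn Bd (by omega)
  have hu' : u ∈ {v : V | v ∉ Bd} := by
    simp only [Set.mem_setOf_eq, hBd, Finset.mem_filter]
    rintro ⟨-, h0, -⟩
    omega
  have hr' : r ∈ {v : V | v ∉ Bd} := by
    simp only [Set.mem_setOf_eq, hBd, Finset.mem_filter]
    rintro ⟨-, -, x, hx1, hx2⟩
    exact factA huns hu hx1 hx2
  obtain ⟨w⟩ := hconn'.preconnected ⟨u, hu'⟩ ⟨r, hr'⟩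
  have hwr : ∀ (a b : {v : V | v ∉ Bd}) (w : (G.induce {v : V | v ∉ Bd}).Walk a b),
      ReachS G D u a.val → ReachS G D u b.val := by
    intro a b w
    induction w with
    | nil => exact id
    | @cons a c b hadj q ih =>
      intro hra
      apply ih
      have hGadj : G.Adj a.val c.val := hadj
      have hc1 : 1 ≤ D c.val := by
        by_contra hc0
        apply c.prop
        simp only [hBd, Finset.mem_filter]
        exact ⟨Finset.mem_univ _, by omega, a.val, hra, hGadj⟩
      have ha1 : 1 ≤ D a.val := by
        rcases eq_or_ne u a.val with h | h
        · rw [← h]; omega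
        · exact reach_pos hra h
      exact hra.trans (reach_single hGadj ha1 hc1)
  have : ReachS G D u r := hwr _ _ w (reach_refl u)
  have : 1 ≤ D r := reach_pos this (fun h => by rw [h, fact_r0 huns] at hu; omega)
  rw [fact_r0 huns] at this
  omega

end Main

open Finset in
lemma main_upper {V : Type*} [Fintype V] [DecidableEq V] {G : SimpleGraph V}
    (hG : G.Connected) (hcard : 3 < Fintype.card V)
    (h3conn : ∀ s : Finset V, s.card ≤ 2 → (G.induce {v : V | v ∉ s}).Connected)
    (hd : G.diam = 2) (D : V → ℕ) (r : V) (hsum : (∑ v, D v) = Fintype.card V) :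
    PebSolvable G D r := by
  classical
  by_contra huns
  -- basic facts
  have h3 : ∀ u, D u ≤ 3 := fact3 hG hd huns
  have hr0 : D r = 0 := fact_r0 huns
  -- the boundary of the component of u
  set Bd : V → Finset V := fun u =>
    Finset.univ.filter (fun d => D d = 0 ∧ ∃ x, ReachS G D u x ∧ G.Adj x d) with hBdf
  set BdN : V → Finset V := fun u => (Bd u).filter (fun w => G.Adj w r) with hBdNf
  have hBdNmem : ∀ u w, w ∈ BdN u ↔
      (D w = 0 ∧ (∃ x, ReachS G D u x ∧ G.Adj x w) ∧ G.Adj w r) := by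
    intro u w
    simp only [hBdNf, hBdf, Finset.mem_filter, Finset.mem_univ, true_and]
    tauto
  -- choice of a boundary vertex adjacent to r
  have hCnb : ∀ u : V, ∃ c, 2 ≤ D u → (G.Adj u c ∧ G.Adj c r ∧ D c = 0) := by
    intro u
    by_cases h : 2 ≤ D u
    · obtain ⟨c, hc⟩ := factC hG hd huns h
      exact ⟨c, fun _ => hc⟩
    · exact ⟨u, fun hc => absurd hc h⟩
  choose cc hcc using hCnb
  have hccBdN : ∀ u, 2 ≤ D u → cc u ∈ BdN u := by
    intro u hu
    rw [hBdNmem]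
    exact ⟨(hcc u hu).2.2, ⟨u, reach_refl u, (hcc u hu).1⟩, (hcc u hu).2.1⟩
  -- the classes of big vertices
  set SB : Finset V := Finset.univ.filter (fun u => 2 ≤ D u) with hSBf
  set SB2 : Finset V := Finset.univ.filter (fun u => D u = 2) with hSB2f
  set SB3 : Finset V := Finset.univ.filter (fun u => D u = 3) with hSB3f
  set SB3d : Finset V := SB3.filter (fun u => (BdN u).card ≤ 1) with hSB3df
  set SB3nd : Finset V := SB3.filter (fun u => ¬ (BdN u).card ≤ 1) with hSB3ndf
  have hSB3mem : ∀ u, u ∈ SB3 ↔ D u = 3 := by intro u; simp [hSB3f]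
  have hSBmem : ∀ u, u ∈ SB ↔ 2 ≤ D u := by intro u; simp [hSBf]
  -- second choice for non-deficient vertices with three pebbles
  have hC2 : ∀ u : V, ∃ c2, u ∈ SB3nd → (c2 ∈ BdN u ∧ c2 ≠ cc u) := by
    intro u
    by_cases h : u ∈ SB3nd
    · have h1 : 1 < (BdN u).card := by
        have := (Finset.mem_filter.mp h).2
        omega
      obtain ⟨b, hb1, hb2⟩ := Finset.exists_mem_ne h1 (cc u)
      exact ⟨b, fun _ => ⟨hb1, hb2⟩⟩
    · exact ⟨u, fun hc => absurd hc h⟩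
  choose c2 hc2 using hC2
  -- no two distinct big vertices, one carrying 3 pebbles, in the same component
  have hnreach : ∀ u v : V, D v = 3 → 2 ≤ D u → u ≠ v → ¬ ReachS G D u v :=
    fun u v h3v h2u hne hr => factB hG hd huns h3v h2u hne hr
  -- privacy of boundary-near-r vertices
  have hpriv : ∀ u v w : V, u ≠ v → 2 ≤ D u → D v = 3 → w ∈ BdN u → w ∈ BdN v → False := by
    intro u v w huv hu hv hwu hwv
    obtain ⟨hw0, ⟨xu, hxu1, hxu2⟩, hwr⟩ := (hBdNmem u w).mp hwu
    obtain ⟨-, ⟨xv, hxv1, hxv2⟩, -⟩ := (hBdNmem v w).mp hwv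
    exact factP5 huns hu (by omega) (hnreach u v hv hu huv) hxu1 hxu2 hxv1 hxv2 hw0 hwr
  -- the three families of zero vertices
  set Y1 : Finset V := SB.image cc with hY1f
  set Y2 : Finset V := SB3nd.image c2 with hY2f
  set BdOut : V → Finset V := fun u => (Bd u).filter (fun d' => ¬ G.Adj d' r) with hBdOutf
  set Y3 : Finset V := SB3d.biUnion BdOut with hY3f
  have hSB3d_big : ∀ u ∈ SB3d, D u = 3 := by
    intro u hu
    exact (hSB3mem u).mp (Finset.mem_of_mem_filter u hu)
  have hSB3nd_big : ∀ u ∈ SB3nd, D u = 3 := by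
    intro u hu
    exact (hSB3mem u).mp (Finset.mem_of_mem_filter u hu)
  -- cardinalities
  have hY1card : Y1.card = SB.card := by
    rw [hY1f]
    apply Finset.card_image_of_injOn
    intro u hu v hv heq
    rw [Finset.mem_coe] at hu hv
    by_contra hne
    have hu2 : 2 ≤ D u := (hSBmem u).mp hu
    have hv2 : 2 ≤ D v := (hSBmem v).mp hv
    have h2' : G.Adj v (cc u) := by rw [heq]; exact (hcc v hv2).1
    exact fact5 huns hne hu2 hv2 (hcc u hu2).1 h2' (hcc u hu2).2.1
  have hY2card : Y2.card = SB3nd.card := by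
    rw [hY2f]
    apply Finset.card_image_of_injOn
    intro u hu v hv heq
    rw [Finset.mem_coe] at hu hv
    by_contra hne
    have hmv : c2 u ∈ BdN v := by rw [heq]; exact (hc2 v hv).1
    exact hpriv u v (c2 u) hne (by rw [hSB3nd_big u hu]; omega) (hSB3nd_big v hv)
      (hc2 u hu).1 hmv
  have hdisj12 : Disjoint Y1 Y2 := by
    rw [Finset.disjoint_left]
    rintro w hw1 hw2
    rw [hY1f, Finset.mem_image] at hw1
    rw [hY2f, Finset.mem_image] at hw2
    obtain ⟨u, hu, hequ⟩ := hw1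
    obtain ⟨v, hv, heqv⟩ := hw2
    have hu2 : 2 ≤ D u := (hSBmem u).mp hu
    rcases eq_or_ne u v with h | h
    · apply (hc2 v hv).2
      rw [heqv, ← hequ, h]
    · have m1 : w ∈ BdN u := by rw [← hequ]; exact hccBdN u hu2
      have m2 : w ∈ BdN v := by rw [← heqv]; exact (hc2 v hv).1
      exact hpriv u v w h hu2 (hSB3nd_big v hv) m1 m2
  have hY3r : ∀ w ∈ Y3, D w = 0 ∧ ¬ G.Adj w r ∧ w ≠ r := by
    intro w hw
    rw [hY3f, Finset.mem_biUnion] at hw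
    obtain ⟨u, hu, hw⟩ := hw
    rw [hBdOutf] at hw
    obtain ⟨hwBd, hnadj⟩ := Finset.mem_filter.mp hw
    rw [hBdf] at hwBd
    obtain ⟨-, hw0, x, hx1, hx2⟩ := Finset.mem_filter.mp hwBd
    refine ⟨hw0, hnadj, fun hc => ?_⟩
    have hx2' : G.Adj x r := by rw [← hc]; exact hx2
    exact factA huns (by have := hSB3d_big u hu; omega) hx1 hx2'
  have hdisj3 : Disjoint (Y1 ∪ Y2) Y3 := by
    rw [Finset.disjoint_left]
    intro w hw hw3
    have hnadj := (hY3r w hw3).2.1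
    rcases Finset.mem_union.mp hw with h | h
    · rw [hY1f, Finset.mem_image] at h
      obtain ⟨u, hu, hequ⟩ := h
      exact hnadj (by rw [← hequ]; exact (hcc u ((hSBmem u).mp hu)).2.1)
    · rw [hY2f, Finset.mem_image] at h
      obtain ⟨v, hv, heqv⟩ := h
      have := ((hBdNmem v (c2 v)).mp (hc2 v hv).1).2.2
      exact hnadj (by rw [← heqv]; exact this)
  -- double counting: each outside zero serves at most two deficient components
  have hY3card : SB3d.card ≤ Y3.card := by
    have hdc := Finset.card_mul_le_card_mul (fun u d => d ∈ BdOut u) (s := SB3d) (t := Y3)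
      (m := 2) (n := 2)
      (by
        intro u hu
        have hb3 : 3 ≤ (Bd u).card := fact_bd3 h3conn huns (by have := hSB3d_big u hu; omega)
        have hsplit : (BdN u).card + (BdOut u).card = (Bd u).card := by
          rw [hBdNf, hBdOutf]
          exact Finset.card_filter_add_card_filter_not _
        have hdef : (BdN u).card ≤ 1 := (Finset.mem_filter.mp hu).2
        have h2le : 2 ≤ (BdOut u).card := by omega
        refine le_trans h2le (Finset.card_le_card ?_)
        intro d hdmem
        rw [Finset.mem_bipartiteAbove]
        exact ⟨Finset.mem_biUnion.mpr ⟨u, hu, hdmem⟩, hdmem⟩)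
      (by
        intro d hdY3
        by_contra hgt
        push_neg at hgt
        obtain ⟨u1, u2, u3, hu1, hu2, hu3, h12, h13, h23⟩ :=
          Finset.two_lt_card_iff.mp hgt
        rw [Finset.mem_bipartiteBelow] at hu1 hu2 hu3
        obtain ⟨hu1d, hd1⟩ := hu1
        obtain ⟨hu2d, hd2⟩ := hu2
        obtain ⟨hu3d, hd3⟩ := hu3
        have e1 : D u1 = 3 := hSB3d_big u1 hu1d
        have e2 : D u2 = 3 := hSB3d_big u2 hu2d
        have e3 : D u3 = 3 := hSB3d_big u3 hu3d
        have hmem : ∀ u' : V, d ∈ BdOut u' →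
            D d = 0 ∧ ∃ x, ReachS G D u' x ∧ G.Adj x d := by
          intro u' hm
          rw [hBdOutf] at hm
          have := Finset.mem_of_mem_filter d hm
          rw [hBdf] at this
          have := Finset.mem_filter.mp this
          exact ⟨this.2.1, this.2.2⟩
        obtain ⟨hd0, x1, hx11, hx12⟩ := hmem u1 hd1
        obtain ⟨-, x2, hx21, hx22⟩ := hmem u2 hd2
        obtain ⟨-, x3, hx31, hx32⟩ := hmem u3 hd3
        exact factP12 hG hd huns (by omega) (by omega) e3
          (hnreach u1 u2 e2 (by omega) h12) (hnreach u1 u3 e3 (by omega) h13)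
          (hnreach u2 u3 e3 (by omega) h23) hd0 hx11 hx12 hx21 hx22 hx31 hx32)
    omega
  -- every member of Y is a non-root zero vertex
  set Z0 : Finset V := Finset.univ.filter (fun v => D v = 0) with hZ0f
  have hYsub : (Y1 ∪ Y2) ∪ Y3 ⊆ Z0.erase r := by
    intro w hw
    rw [Finset.mem_erase, hZ0f, Finset.mem_filter]
    rcases Finset.mem_union.mp hw with hw | hw
    · rcases Finset.mem_union.mp hw with hw | hw
      · rw [hY1f, Finset.mem_image] at hw
        obtain ⟨u, hu, hequ⟩ := hw
        have hu2 := (hSBmem u).mp hu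
        have hadj : G.Adj w r := by rw [← hequ]; exact (hcc u hu2).2.1
        exact ⟨hadj.ne, Finset.mem_univ _, by rw [← hequ]; exact (hcc u hu2).2.2⟩
      · rw [hY2f, Finset.mem_image] at hw
        obtain ⟨v, hv, heqv⟩ := hw
        obtain ⟨h0, -, hadj⟩ := (hBdNmem v (c2 v)).mp (hc2 v hv).1
        have hadj' : G.Adj w r := by rw [← heqv]; exact hadj
        exact ⟨hadj'.ne, Finset.mem_univ _, by rw [← heqv]; exact h0⟩
    · obtain ⟨h0, -, hne⟩ := hY3r w hw
      exact ⟨hne, Finset.mem_univ _, h0⟩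
  -- counting pebbles
  have hrZ0 : r ∈ Z0 := by rw [hZ0f, Finset.mem_filter]; exact ⟨Finset.mem_univ _, hr0⟩
  set S1 : Finset V := Finset.univ.filter (fun v => 1 ≤ D v) with hS1f
  have hZ0S1 : Z0.card + S1.card = Fintype.card V := by
    have he : Z0 = Finset.univ.filter (fun v => ¬ 1 ≤ D v) := by
      ext v
      simp only [hZ0f, Finset.mem_filter, Finset.mem_univ, true_and]
      omega
    rw [he, hS1f, ← Finset.card_univ, add_comm]
    exact Finset.card_filter_add_card_filter_not _
  have hsumS1 : ∑ v ∈ S1, D v = Fintype.card V := by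
    rw [← hsum, hS1f]
    apply Finset.sum_subset (Finset.filter_subset _ _)
    intro x _ hx
    rw [Finset.mem_filter] at hx
    push_neg at hx
    have := hx (Finset.mem_univ x)
    omega
  have hsplit1 : ∑ v ∈ S1, D v = S1.card + ∑ v ∈ S1, (D v - 1) := by
    rw [Finset.card_eq_sum_ones, ← Finset.sum_add_distrib]
    apply Finset.sum_congr rfl
    intro v hv
    have := (Finset.mem_filter.mp hv).2
    omega
  have hsum3 : ∑ v ∈ S1, (D v - 1) = ∑ v ∈ SB, (D v - 1) := by
    symm
    apply Finset.sum_subset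
    · intro u hu
      rw [hSBf, Finset.mem_filter] at hu
      rw [hS1f, Finset.mem_filter]
      exact ⟨hu.1, by omega⟩
    · intro x _ hx
      rw [hSBf, Finset.mem_filter] at hx
      push_neg at hx
      have := hx (Finset.mem_univ x)
      omega
  have hSBsplit : SB = SB2 ∪ SB3 := by
    ext u
    rw [hSBf, hSB2f, hSB3f, Finset.mem_union, Finset.mem_filter, Finset.mem_filter,
      Finset.mem_filter]
    have := h3 u
    constructor
    · rintro ⟨h1, h2⟩
      rcases Nat.lt_or_ge (D u) 3 with h | h
      · exact Or.inl ⟨h1, by omega⟩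
      · exact Or.inr ⟨h1, by omega⟩
    · rintro (⟨h1, h2⟩ | ⟨h1, h2⟩) <;> exact ⟨h1, by omega⟩
  have hSB23disj : Disjoint SB2 SB3 := by
    rw [Finset.disjoint_left]
    intro u h1 h2
    rw [hSB2f, Finset.mem_filter] at h1
    rw [hSB3f, Finset.mem_filter] at h2
    omega
  have hsum4 : ∑ v ∈ SB, (D v - 1) = SB2.card + 2 * SB3.card := by
    rw [hSBsplit, Finset.sum_union hSB23disj]
    have e2 : ∑ v ∈ SB2, (D v - 1) = SB2.card := by
      rw [Finset.card_eq_sum_ones]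
      apply Finset.sum_congr rfl
      intro v hv
      have := (Finset.mem_filter.mp hv).2
      omega
    have e3 : ∑ v ∈ SB3, (D v - 1) = 2 * SB3.card := by
      rw [Finset.sum_congr rfl (fun v hv => by
        have := (Finset.mem_filter.mp hv).2
        omega : ∀ v ∈ SB3, D v - 1 = 2)]
      rw [Finset.sum_const, smul_eq_mul, mul_comm]
    omega
  have hSBcard : SB.card = SB2.card + SB3.card := by
    rw [hSBsplit, Finset.card_union_of_disjoint hSB23disj]
  have hSB3card : SB3d.card + SB3nd.card = SB3.card := by
    rw [hSB3df, hSB3ndf]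
    exact Finset.card_filter_add_card_filter_not _
  -- final contradiction
  have hZ0card : Z0.card = SB2.card + 2 * SB3.card := by omega
  have hYcard : ((Y1 ∪ Y2) ∪ Y3).card = Y1.card + Y2.card + Y3.card := by
    rw [Finset.card_union_of_disjoint hdisj3, Finset.card_union_of_disjoint hdisj12]
  have hle : ((Y1 ∪ Y2) ∪ Y3).card ≤ (Z0.erase r).card := Finset.card_le_card hYsub
  have herase : (Z0.erase r).card = Z0.card - 1 := Finset.card_erase_of_mem hrZ0
  have hZ0pos : 1 ≤ Z0.card := Finset.card_pos.mpr ⟨r, hrZ0⟩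
  omega

end PebAux

theorem three_connected_diameter_two_class0 {V : Type*} [Fintype V] [DecidableEq V]
    (G : SimpleGraph V) (hG : G.Connected) (hcard : 3 < Fintype.card V)
    (h3conn : ∀ s : Finset V, s.card ≤ 2 → (G.induce {v : V | v ∉ s}).Connected)
    (hd : G.diam = 2) :
    pebblingNumber V G = Fintype.card V := by
  classical
  have hmem : (Fintype.card V) ∈
      {t : ℕ | ∀ D : V → ℕ, ∀ r : V, (∑ v, D v) = t → PebSolvable G D r} :=
    fun D r hsum => PebAux.main_upper hG hcard h3conn hd D r hsum
  apply le_antisymm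
  · exact Nat.sInf_le hmem
  · refine le_csInf ⟨_, hmem⟩ ?_
    intro t ht
    by_contra hlt
    push_neg at hlt
    have hne : Nonempty V := Fintype.card_pos_iff.mp (by omega)
    obtain ⟨r⟩ := hne
    have hcount : t ≤ (Finset.univ.erase r).card := by
      rw [Finset.card_erase_of_mem (Finset.mem_univ r), Finset.card_univ]
      omega
    obtain ⟨T, hTsub, hTcard⟩ := Finset.exists_subset_card_eq hcount
    set D : V → ℕ := fun v => if v ∈ T then 1 else 0 with hDf
    have hsumD : (∑ v, D v) = t := by
      rw [hDf, Finset.sum_ite_mem, Finset.univ_inter, Finset.sum_const, smul_eq_mul, mul_one,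
        hTcard]
    obtain ⟨D', hrtg, hr1⟩ := ht D r hsumD
    have hD1 : ∀ u, D u ≤ 1 := by
      intro u
      rw [hDf]
      dsimp only
      split <;> omega
    have hfix : ∀ E, Relation.ReflTransGen (PebStep G) D E → E = D := by
      intro E hE
      induction hE with
      | refl => rfl
      | tail hab hbc ih =>
        rw [ih] at hbc
        obtain ⟨u, v, -, h2, -⟩ := hbc
        exact absurd h2 (by have := hD1 u; omega)
    rw [hfix D' hrtg] at hr1
    have hr0 : D r = 0 := by
      rw [hDf]
      dsimp only
      rw [if_neg (fun hc => (Finset.mem_erase.mp (hTsub hc)).1 rfl)]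
    omega
end

section
/- If G has the 2-pebbling property, then f(G □ K_m) ≤ m·f(G). -/
/-- The size of the support of a distribution. -/
def supportSize {V : Type*} [Fintype V] (D : V → ℕ) : ℕ :=
  (Finset.univ.filter fun v => 0 < D v).card

/-- `G` has the 2-pebbling property. -/
def TwoPebbling (V : Type*) [Fintype V] [DecidableEq V] (G : SimpleGraph V) : Prop :=
  ∀ D : V → ℕ, ∀ r : V, 2 * pebblingNumber V G - supportSize D + 1 ≤ ∑ v, D v →
    ∃ D' : V → ℕ, Relation.ReflTransGen (PebStep G) D D' ∧ 2 ≤ D' r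

section aux
variable {V : Type*} [DecidableEq V] {G : SimpleGraph V}

lemma pebstep_mono {d d' e : V → ℕ} (h : PebStep G d d') (hde : d ≤ e) :
    ∃ e', PebStep G e e' ∧ d' ≤ e' := by
  obtain ⟨u, v, hadj, hu, rfl⟩ := h
  have hne : u ≠ v := hadj.ne
  refine ⟨Function.update (Function.update e u (e u - 2)) v (e v + 1),
    ⟨u, v, hadj, le_trans hu (hde u), rfl⟩, fun w => ?_⟩
  rcases eq_or_ne w v with rfl | hv
  · rw [Function.update_self, Function.update_self]
    exact Nat.add_le_add_right (hde w) 1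
  · rcases eq_or_ne w u with rfl | hu'
    · rw [Function.update_of_ne hv, Function.update_of_ne hv, Function.update_self,
        Function.update_self]
      exact Nat.sub_le_sub_right (hde w) 2
    · rw [Function.update_of_ne hv, Function.update_of_ne hv, Function.update_of_ne hu',
        Function.update_of_ne hu']
      exact hde w

lemma rtg_mono {d d' e : V → ℕ} (hde : d ≤ e) (h : Relation.ReflTransGen (PebStep G) d d') :
    ∃ e', Relation.ReflTransGen (PebStep G) e e' ∧ d' ≤ e' := by
  induction h with
  | refl => exact ⟨e, .refl, hde⟩
  | tail _ hstep ih =>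
    obtain ⟨e1, hrtg, hle⟩ := ih
    obtain ⟨e2, hstep2, hle2⟩ := pebstep_mono hstep hle
    exact ⟨e2, hrtg.tail hstep2, hle2⟩

lemma exists_le_sum_eq [Fintype V] (n : ℕ) : ∀ (k : ℕ) (d : V → ℕ), (∑ v, d v) = n + k →
    ∃ d₀, d₀ ≤ d ∧ (∑ v, d₀ v) = n := by
  intro k
  induction k with
  | zero => exact fun d h => ⟨d, le_refl d, by omega⟩
  | succ k ih =>
    intro d h
    have hex : ∃ v, 0 < d v := by
      by_contra hc
      push_neg at hc
      have : (∑ v, d v) = 0 := Finset.sum_eq_zero fun v _ => Nat.le_zero.mp (hc v)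
      omega
    obtain ⟨v, hv⟩ := hex
    have hsum : (∑ w, Function.update d v (d v - 1) w) = n + k := by
      rw [Finset.sum_update_of_mem (Finset.mem_univ v)]
      have h2 := Finset.add_sum_erase Finset.univ d (Finset.mem_univ v)
      rw [Finset.sdiff_singleton_eq_erase]
      omega
    obtain ⟨d₀, hle, hs⟩ := ih (Function.update d v (d v - 1)) hsum
    refine ⟨d₀, fun w => ?_, hs⟩
    have hw' := hle w
    rcases eq_or_ne w v with rfl | hw
    · rw [Function.update_self] at hw'
      exact le_trans hw' (Nat.sub_le _ _)
    · rwa [Function.update_of_ne hw] at hw'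

lemma transfer_steps {u v : V} (hadj : G.Adj u v) :
    ∀ (k : ℕ) (d : V → ℕ), 2 * k ≤ d u →
    ∃ d', Relation.ReflTransGen (PebStep G) d d' ∧ d' v = d v + k ∧
      ∀ w, w ≠ u → w ≠ v → d' w = d w := by
  intro k
  induction k with
  | zero => exact fun d _ => ⟨d, .refl, by omega, fun _ _ _ => rfl⟩
  | succ k ih =>
    intro d hk
    have hne : u ≠ v := hadj.ne
    set d1 := Function.update (Function.update d u (d u - 2)) v (d v + 1) with hd1
    have h1u : d1 u = d u - 2 := by
      rw [hd1, Function.update_of_ne hne, Function.update_self]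
    have h1v : d1 v = d v + 1 := by rw [hd1, Function.update_self]
    have h1w : ∀ w, w ≠ u → w ≠ v → d1 w = d w := by
      intro w hwu hwv
      rw [hd1, Function.update_of_ne hwv, Function.update_of_ne hwu]
    obtain ⟨d', hrtg, hdv, hdw⟩ := ih d1 (by omega)
    refine ⟨d', Relation.ReflTransGen.head ⟨u, v, hadj, by omega, hd1⟩ hrtg, by omega, ?_⟩
    intro w hwu hwv
    rw [hdw w hwu hwv, h1w w hwu hwv]

lemma lift_col {m : ℕ} (j : Fin m) {d d' : V → ℕ}
    (h : Relation.ReflTransGen (PebStep G) d d') :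
    ∀ E : V × Fin m → ℕ, (∀ v, E (v, j) = d v) →
    ∃ E', Relation.ReflTransGen (PebStep (G.boxProd (SimpleGraph.completeGraph (Fin m)))) E E' ∧
      ∀ v, E' (v, j) = d' v := by
  induction h with
  | refl => exact fun E hE => ⟨E, .refl, hE⟩
  | @tail d1 d2 _ hstep ih =>
    intro E hE
    obtain ⟨E1, hrtg, hE1⟩ := ih E hE
    obtain ⟨u, w, hadj, hu, rfl⟩ := hstep
    have hne : u ≠ w := hadj.ne
    refine ⟨Function.update (Function.update E1 (u, j) (E1 (u, j) - 2)) (w, j) (E1 (w, j) + 1),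
      hrtg.tail ⟨(u, j), (w, j), SimpleGraph.boxProd_adj.mpr (Or.inl ⟨hadj, rfl⟩),
        by rw [hE1]; exact hu, rfl⟩, fun v => ?_⟩
    rcases eq_or_ne v w with rfl | hvw
    · rw [Function.update_self, Function.update_self, hE1]
    · have h1 : ((v, j) : V × Fin m) ≠ (w, j) := by simp [hvw]
      rw [Function.update_of_ne h1, Function.update_of_ne hvw]
      rcases eq_or_ne v u with rfl | hvu
      · rw [Function.update_self, Function.update_self, hE1]
      · have h2 : ((v, j) : V × Fin m) ≠ (u, j) := by simp [hvu]
        rw [Function.update_of_ne h2, Function.update_of_ne hvu, hE1]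

lemma bulk_transfer [Fintype V] {m : ℕ} (j : Fin m) :
    ∀ s : Finset (V × Fin m), (∀ c ∈ s, c.2 ≠ j) →
    ∀ E : V × Fin m → ℕ,
    ∃ E', Relation.ReflTransGen (PebStep (G.boxProd (SimpleGraph.completeGraph (Fin m)))) E E' ∧
      ∀ v, E (v, j) + ∑ c ∈ s.filter (fun c => c.1 = v), E c / 2 ≤ E' (v, j) := by
  intro s
  induction s using Finset.induction_on with
  | empty => exact fun _ E => ⟨E, .refl, fun v => by simp⟩
  | @insert c s hc ih =>
    intro hs E
    have hcj : c.2 ≠ j := hs c (Finset.mem_insert_self c s)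
    have hadj : (G.boxProd (SimpleGraph.completeGraph (Fin m))).Adj c (c.1, j) :=
      SimpleGraph.boxProd_adj.mpr (Or.inr ⟨hcj, rfl⟩)
    obtain ⟨E1, h1, h1v, h1w⟩ := transfer_steps hadj (E c / 2) E (by omega)
    obtain ⟨E', h2, h2v⟩ := ih (fun c' hc' => hs c' (Finset.mem_insert_of_mem hc')) E1
    refine ⟨E', h1.trans h2, fun v => ?_⟩
    have hE1s : ∀ c' ∈ s.filter (fun c' => c'.1 = v), E1 c' / 2 = E c' / 2 := by
      intro c' hc'
      have hmem := (Finset.mem_filter.mp hc').1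
      rw [h1w c' (ne_of_mem_of_not_mem hmem hc) ?_]
      intro heq
      exact hs c' (Finset.mem_insert_of_mem hmem) (by rw [heq])
    have hsum : (∑ c' ∈ s.filter (fun c' => c'.1 = v), E1 c' / 2)
        = ∑ c' ∈ s.filter (fun c' => c'.1 = v), E c' / 2 :=
      Finset.sum_congr rfl hE1s
    have hkey := h2v v
    rw [hsum] at hkey
    rw [Finset.filter_insert]
    rcases eq_or_ne c.1 v with hcv | hcv
    · rw [if_pos hcv, Finset.sum_insert (fun hmem => hc (Finset.mem_filter.mp hmem).1)]
      have : E1 (v, j) = E (v, j) + E c / 2 := by rw [← hcv]; exact h1v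
      omega
    · rw [if_neg hcv]
      have : E1 (v, j) = E (v, j) := by
        exact h1w (v, j) (fun heq => hcj (by rw [← heq]))
          (fun heq => hcv (congrArg Prod.fst heq).symm)
      omega

end aux


theorem clique_product_pebbling {V : Type*} [Fintype V] [DecidableEq V]
    (G : SimpleGraph V) (hG : G.Connected) (hG2 : TwoPebbling V G) (m : ℕ) :
    pebblingNumber (V × Fin m) (G.boxProd (SimpleGraph.completeGraph (Fin m))) ≤
      m * pebblingNumber V G := by
  set f := pebblingNumber V G with hf
  -- every distribution on G of size exactly f is solvable
  have hSne : (2 * f + 1) ∈ {t : ℕ | ∀ D : V → ℕ, ∀ r : V, (∑ v, D v) = t → PebSolvable G D r} := by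
    intro d r hsum
    obtain ⟨d', hr1, hr2⟩ := hG2 d r (by omega)
    exact ⟨d', hr1, by omega⟩
  have hfmem : ∀ d : V → ℕ, ∀ r : V, (∑ v, d v) = f → PebSolvable G d r :=
    Nat.sInf_mem (s := {t : ℕ | ∀ D : V → ℕ, ∀ r : V, (∑ v, D v) = t → PebSolvable G D r})
      ⟨2 * f + 1, hSne⟩
  have hsolve_ge : ∀ d : V → ℕ, ∀ r : V, f ≤ ∑ v, d v → PebSolvable G d r := by
    intro d r hge
    obtain ⟨d₀, hle, hsum⟩ := exists_le_sum_eq f ((∑ v, d v) - f) d (by omega)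
    obtain ⟨d', h1, h2⟩ := hfmem d₀ r hsum
    obtain ⟨e', h3, h4⟩ := rtg_mono hle h1
    exact ⟨e', h3, le_trans h2 (h4 r)⟩
  rw [pebblingNumber]
  apply Nat.sInf_le
  intro D ρ hsum
  obtain ⟨r, j⟩ := ρ
  -- helper: solve from column j if it holds ≥ f pebbles
  have hcol : ∀ E : V × Fin m → ℕ, f ≤ (∑ v, E (v, j)) →
      PebSolvable (G.boxProd (SimpleGraph.completeGraph (Fin m))) E (r, j) := by
    intro E hE
    obtain ⟨d', h1, h2⟩ := hsolve_ge (fun v => E (v, j)) r hE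
    obtain ⟨E', h3, h4⟩ := lift_col j h1 E (fun v => rfl)
    exact ⟨E', h3, by rw [h4 r]; exact h2⟩
  have hsum' : (∑ i : Fin m, ∑ v : V, D (v, i)) = m * f := by
    rw [← hsum, Fintype.sum_prod_type, Finset.sum_comm]
  by_cases h1 : f ≤ ∑ v, D (v, j)
  · exact hcol D h1
  by_cases h2 : ∃ i, i ≠ j ∧ 2 * f - supportSize (fun v => D (v, i)) + 1 ≤ ∑ v, D (v, i)
  · obtain ⟨i, hij, hi⟩ := h2
    obtain ⟨d', hrtg, h2r⟩ := hG2 (fun v => D (v, i)) r hi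
    obtain ⟨E', h3, h4⟩ := lift_col i hrtg D (fun v => rfl)
    refine ⟨Function.update (Function.update E' (r, i) (E' (r, i) - 2)) (r, j) (E' (r, j) + 1),
      h3.tail ⟨(r, i), (r, j), SimpleGraph.boxProd_adj.mpr (Or.inr ⟨hij, rfl⟩),
        by rw [h4 r]; exact h2r, rfl⟩, by rw [Function.update_self]; omega⟩
  · push_neg at h2
    have hq : ∀ i, i ≠ j → (∑ v, D (v, i)) + supportSize (fun v => D (v, i)) ≤ 2 * f := by
      intro i hij
      have h3 := h2 i hij
      rcases Nat.eq_zero_or_pos (∑ v, D (v, i)) with h0 | h0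
      · have : supportSize (fun v => D (v, i)) = 0 := by
          rw [supportSize, Finset.card_eq_zero, Finset.filter_eq_empty_iff]
          intro v _
          have := (Finset.sum_eq_zero_iff.mp h0) v (Finset.mem_univ v)
          omega
        omega
      · omega
    have hci : ∀ i : Fin m, (∑ v, D (v, i)) ≤ 2 * (∑ v, D (v, i) / 2) + supportSize (fun v => D (v, i)) := by
      intro i
      rw [supportSize, Finset.card_filter, Finset.mul_sum, ← Finset.sum_add_distrib]
      refine Finset.sum_le_sum fun v _ => ?_
      split_ifs with h <;> omega
    obtain ⟨E', hrtg, hge⟩ := bulk_transfer j (Finset.univ.filter fun c => c.2 ≠ j)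
      (fun c hc => (Finset.mem_filter.mp hc).2) D
    have key : f ≤ ∑ v, E' (v, j) := by
      have h5 : (∑ v, (D (v, j) + ∑ c ∈ (Finset.univ.filter fun c : V × Fin m => c.2 ≠ j).filter
          (fun c => c.1 = v), D c / 2)) ≤ ∑ v, E' (v, j) :=
        Finset.sum_le_sum fun v _ => hge v
      rw [Finset.sum_add_distrib] at h5
      have h6 : (∑ v : V, ∑ c ∈ (Finset.univ.filter fun c : V × Fin m => c.2 ≠ j).filter
          (fun c => c.1 = v), D c / 2) = ∑ i ∈ Finset.univ.erase j, ∑ v : V, D (v, i) / 2 := by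
        rw [Finset.sum_fiberwise (Finset.univ.filter fun c : V × Fin m => c.2 ≠ j)
          (fun c => c.1) (fun c => D c / 2)]
        rw [Finset.sum_filter, Fintype.sum_prod_type, Finset.sum_comm]
        rw [← Finset.filter_ne' Finset.univ j, Finset.sum_filter]
        refine Finset.sum_congr rfl fun i _ => ?_
        split_ifs with h
        · rfl
        · simp
      rw [h6] at h5
      have h7 : (∑ i ∈ Finset.univ.erase j, ∑ v, D (v, i)) ≤
          (∑ i ∈ Finset.univ.erase j, ∑ v : V, D (v, i) / 2) + (m - 1) * f := by
        have h7a : (∑ i ∈ Finset.univ.erase j, ∑ v, D (v, i)) ≤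
            ∑ i ∈ Finset.univ.erase j, ((∑ v : V, D (v, i) / 2) + f) := by
          refine Finset.sum_le_sum fun i hi => ?_
          have hij := Finset.ne_of_mem_erase hi
          have ha := hq i hij
          have hb := hci i
          omega
        rwa [Finset.sum_add_distrib, Finset.sum_const, Finset.card_erase_of_mem (Finset.mem_univ j),
          Finset.card_univ, Fintype.card_fin, smul_eq_mul] at h7a
      have h8 : (∑ v, D (v, j)) + (∑ i ∈ Finset.univ.erase j, ∑ v, D (v, i)) = m * f := by
        rw [← hsum']
        exact Finset.add_sum_erase Finset.univ (fun i => ∑ v, D (v, i)) (Finset.mem_univ j)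
      have h9 : f ≤ m * f := Nat.le_mul_of_pos_left f j.pos
      have h10 : (m - 1) * f = m * f - f := Nat.sub_one_mul m f
      omega
    obtain ⟨E'', h11, h12⟩ := hcol E' key
    exact ⟨E'', hrtg.trans h11, h12⟩
end
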